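/- Reduction of singularities via maximal contact: let D be a special polyhedra system and T ∉ Sing(D) a stratum having maximal contact with D. If Hironaka's projection D^T of D from T admits a reduction of singularities, then D admits a reduction of singularities. -/

import Mathlib

open scoped Pointwise

namespace RedSing

/-! ### Vectors and polyhedra.
A vector "in `ℝ^J`" is a function `ℕ → ℝ` supported on the finite set `J`. -/

abbrev Vec : Type := ℕ → ℝ

/-- The cone `ℝ_{≥0}^J` of nonnegative vectors supported on `J`. -/
def suppCone (J : Finset ℕ) : Set Vec :=
  {σ | (∀ j, 0 ≤ σ j) ∧ ∀ j, j ∉ J → σ j = 0}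

/-- Positive convex hull `[[A]] = convexHull (A + ℝ_{≥0}^J)`. -/
noncomputable def posHull (J : Finset ℕ) (A : Set Vec) : Set Vec :=
  convexHull ℝ (A + suppCone J)

/-- The lattice points `(1/d)·ℤ_{≥0}^J`. -/
def latticePts (J : Finset ℕ) (d : ℕ) : Set Vec :=
  {σ | σ ∈ suppCone J ∧ ∀ j, ∃ m : ℕ, σ j = (m : ℝ) / (d : ℝ)}

/-- `Δ ⊆ ℝ_{≥0}^J` is a characteristic polyhedron with denominator `d`. -/
def IsCharPoly (J : Finset ℕ) (d : ℕ) (Δ : Set Vec) : Prop :=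
  ∃ A, A ⊆ latticePts J d ∧ Δ = posHull J A

/-! ### Support fabrics -/

/-- A support fabric: a nonempty finite index set `I` together with a
downward-closed family `H` of subsets of `I` (the strata). -/
structure Fabric where
  I : Finset ℕ
  I_nonempty : I.Nonempty
  H : Set (Finset ℕ)
  mem_sub : ∀ J ∈ H, J ⊆ I
  downward : ∀ J ∈ H, ∀ J' ⊆ J, J' ∈ H

/-- Dimension of a support fabric: the maximal cardinality of a stratum. -/
noncomputable def Fabric.dim (F : Fabric) : ℕ :=
  sSup {n | ∃ J ∈ F.H, J.card = n}

/-- The Zariski topology on finsets: the open sets are the downward-closed families;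
subsets such as the strata set `H` carry the subspace topology. -/
instance zariskiTopology : TopologicalSpace (Finset ℕ) where
  IsOpen U := ∀ J ∈ U, ∀ J' ⊆ J, J' ∈ U
  isOpen_univ := fun J _ J' _ => Set.mem_univ J'
  isOpen_inter := fun s t hs ht J hJ J' hJ' => ⟨hs J hJ.1 J' hJ', ht J hJ.2 J' hJ'⟩
  isOpen_sUnion := fun S hS J hJ J' hJ' => by
    obtain ⟨t, htS, hJt⟩ := hJ
    exact ⟨t, htS, hS t htS J hJt J' hJ'⟩

/-! ### Polyhedra systems -/

/-- A polyhedra system over a support fabric: a nonempty characteristic polyhedron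
with denominator `d` for each stratum, compatible with the projections
(restriction of functions). -/
structure PolySys where
  F : Fabric
  d : ℕ
  d_pos : 0 < d
  Δ : Finset ℕ → Set Vec
  char : ∀ J ∈ F.H, IsCharPoly J d (Δ J)
  nonempty : ∀ J ∈ F.H, (Δ J).Nonempty
  compat : ∀ J₁ ∈ F.H, ∀ J₂ ∈ F.H, J₁ ⊆ J₂ →
    Δ J₁ = (fun σ => fun j => if j ∈ J₁ then σ j else 0) '' Δ J₂

/-- Contact exponent `δ(Δ) = min {|σ| : σ ∈ Δ}` (with the convention `δ = -1`
for the empty index set). -/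
noncomputable def contactExp (J : Finset ℕ) (Δ : Set Vec) : ℝ :=
  if J = (∅ : Finset ℕ) then -1 else sInf ((fun σ => ∑ j ∈ J, σ j) '' Δ)

/-- Singular locus: strata with contact exponent at least 1. -/
def Sing (D : PolySys) : Set (Finset ℕ) :=
  {J | J ∈ D.F.H ∧ 1 ≤ contactExp J (D.Δ J)}

/-- `D` is special: `δ(D) = max {δ(Δ_J)} = 1`. -/
def IsSpecial (D : PolySys) : Prop :=
  (∀ J ∈ D.F.H, contactExp J (D.Δ J) ≤ 1) ∧ ∃ J ∈ D.F.H, contactExp J (D.Δ J) = 1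

/-! ### Blow-ups and transforms -/

/-- The strata of the blow-up centered in `J`, with new index `inf` (playing `∞`). -/
def blowupH (H : Set (Finset ℕ)) (J : Finset ℕ) (inf : ℕ) : Set (Finset ℕ) :=
  {K | K ∈ H ∧ ¬ J ⊆ K} ∪
    {J' | ∃ K, (K ∈ H ∧ J ⊆ K) ∧ ∃ A, A ⊂ J ∧ J' = (K \ J) ∪ A ∪ {inf}}

/-- The map `π_J^#` from the strata of the blow-up to the strata of `F`. -/
def blowdown (J : Finset ℕ) (inf : ℕ) (J' : Finset ℕ) : Finset ℕ :=
  if inf ∈ J' then (J'.erase inf) ∪ J else J'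

/-- The map `λ_{J'} : ℝ^K → ℝ^{J'}`. -/
noncomputable def lamMap (J J' : Finset ℕ) (inf : ℕ) (σ : Vec) : Vec :=
  fun j => if j = inf then ∑ i ∈ J, σ i else if j ∈ J' then σ j else 0

/-- The indicator vector `e_{J',∞}` of the new index. -/
def eVec (inf : ℕ) : Vec := fun j => if j = inf then 1 else 0

/-- The polyhedron `Δ⁰_{J'}` of the total transform at a stratum `J'` of the blow-up. -/
noncomputable def totalΔ (D : PolySys) (J : Finset ℕ) (inf : ℕ) (J' : Finset ℕ) : Set Vec :=
  if inf ∈ J' then posHull J' (lamMap J J' inf '' D.Δ (blowdown J inf J'))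
  else D.Δ J'

/-- The polyhedron `Δ'_{J'} = Δ⁰_{J'} - e_{J',∞}` of the characteristic transform
(`e_{J',∞} = 0` when `∞ ∉ J'`). -/
noncomputable def charΔ (D : PolySys) (J : Finset ℕ) (inf : ℕ) (J' : Finset ℕ) : Set Vec :=
  if inf ∈ J' then
    (fun σ => σ - eVec inf) '' posHull J' (lamMap J J' inf '' D.Δ (blowdown J inf J'))
  else D.Δ J'

/-- `D'` is the total transform `Λ⁰_J(D)` of `D` centered in the nonempty stratum `J`,
with new index `inf`. -/
def IsTotalTransformAt (D D' : PolySys) (J : Finset ℕ) (inf : ℕ) : Prop :=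
  J ∈ D.F.H ∧ J ≠ ∅ ∧ D'.d = D.d ∧ inf ∉ D.F.I ∧
  D'.F.I = insert inf D.F.I ∧ D'.F.H = blowupH D.F.H J inf ∧
  ∀ J' ∈ D'.F.H, D'.Δ J' = totalΔ D J inf J'

/-- `D'` is a total transform of `D` centered in `J`. -/
def IsTotalTransform (D D' : PolySys) (J : Finset ℕ) : Prop :=
  ∃ inf, IsTotalTransformAt D D' J inf

/-- `D'` is the characteristic transform `Λ_J(D)` of `D` centered in the singular
stratum `J`, with new index `inf`. -/
def IsCharTransformAt (D D' : PolySys) (J : Finset ℕ) (inf : ℕ) : Prop :=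
  J ∈ Sing D ∧ D'.d = D.d ∧ inf ∉ D.F.I ∧
  D'.F.I = insert inf D.F.I ∧ D'.F.H = blowupH D.F.H J inf ∧
  ∀ J' ∈ D'.F.H, D'.Δ J' = charΔ D J inf J'

/-- `D'` is a characteristic transform of `D` centered in `J`. -/
def IsCharTransform (D D' : PolySys) (J : Finset ℕ) : Prop :=
  ∃ inf, IsCharTransformAt D D' J inf

/-- A reduction of singularities of `D`: a finite sequence of characteristic
transforms, each centered in a singular stratum of the previous system, ending
in a system with empty singular locus. -/
def HasReduction (D : PolySys) : Prop :=
  ∃ (k : ℕ) (seq : ℕ → PolySys), seq 0 = D ∧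
    (∀ i, i < k → ∃ J, IsCharTransform (seq i) (seq (i + 1)) J) ∧
    Sing (seq k) = ∅

/-! ### Strict tangent space and maximal contact -/

/-- Hironaka's strict tangent space `T(Δ)` of a polyhedron `Δ ⊆ ℝ_{≥0}^J`. -/
def strictTangent (J : Finset ℕ) (Δ : Set Vec) : Set ℕ :=
  {j | ∃ σ ∈ Δ, (∑ i ∈ J, σ i) = 1 ∧ σ j ≠ 0}

/-- The stratum `T` has maximal contact with the (special) system `D`. -/
def HasMaximalContact (D : PolySys) (T : Finset ℕ) : Prop :=
  T ∈ D.F.H ∧ ∀ J ∈ Sing D, (↑T : Set ℕ) ⊆ strictTangent J (D.Δ J)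

/-! ### Hironaka's projection from a stratum `T` -/

/-- Hironaka's projection `∇_J^T(σ) = σ|_{J∖T} / (1 - Σ_{j∈T} σ(j))`. -/
noncomputable def hironakaProj (T J : Finset ℕ) (σ : Vec) : Vec :=
  fun j => if j ∈ J \ T then σ j / (1 - ∑ i ∈ T, σ i) else 0

/-- The polyhedron `Δ^T_{J*} = ∇_J^T(Δ_J ∩ M_J^T)` of Hironaka's projection,
where `J = J* ∪ T`. -/
noncomputable def projΔ (D : PolySys) (T J' : Finset ℕ) : Set Vec :=
  hironakaProj T (J' ∪ T) '' {σ | σ ∈ D.Δ (J' ∪ T) ∧ (∑ i ∈ T, σ i) < 1}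

/-- The strata `H^T = {J ∖ T : T ⊆ J ∈ H}` of the projected fabric `F^T`. -/
def projH (F : Fabric) (T : Finset ℕ) : Set (Finset ℕ) :=
  {J' | ∃ J, (J ∈ F.H ∧ T ⊆ J) ∧ J' = J \ T}

/-- The singular locus of Hironaka's projection `D^T`. -/
def projSing (D : PolySys) (T : Finset ℕ) : Set (Finset ℕ) :=
  {J' | J' ∈ projH D.F T ∧ (projΔ D T J').Nonempty ∧ 1 ≤ contactExp J' (projΔ D T J')}

/-- `E` is Hironaka's projection `D^T` of `D` from the stratum `T`
(a polyhedra system over `F^T` with denominator `d!·d`). -/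
def IsHironakaProjection (D E : PolySys) (T : Finset ℕ) : Prop :=
  E.F.I = D.F.I \ T ∧ E.F.H = projH D.F T ∧ E.d = Nat.factorial D.d * D.d ∧
  ∀ J' ∈ E.F.H, E.Δ J' = projΔ D T J'

/-! ### Reduction `Red_C` of a system to a closed set `C` of strata -/

/-- The fabric `Red_C(F)`, with strata `H_C = ⋃_{J ∈ C} P(J)`. -/
def Fabric.red (F : Fabric) (C : Set (Finset ℕ)) : Fabric where
  I := F.I
  I_nonempty := F.I_nonempty
  H := {J' | ∃ J, (J ∈ C ∧ J ∈ F.H) ∧ J' ⊆ J}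
  mem_sub := by
    rintro J' ⟨J, ⟨_, hJH⟩, hsub⟩
    exact hsub.trans (F.mem_sub J hJH)
  downward := by
    rintro J' ⟨J, hJ, hsub⟩ J'' hsub'
    exact ⟨J, hJ, hsub'.trans hsub⟩

/-- The reduction `Red_C(D)` of a polyhedra system to a closed set `C ⊆ H`. -/
noncomputable def PolySys.red (D : PolySys) (C : Set (Finset ℕ)) : PolySys where
  F := D.F.red C
  d := D.d
  d_pos := D.d_pos
  Δ := D.Δ
  char := by
    rintro J ⟨K, ⟨_, hK⟩, hsub⟩
    exact D.char J (D.F.downward K hK J hsub)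
  nonempty := by
    rintro J ⟨K, ⟨_, hK⟩, hsub⟩
    exact D.nonempty J (D.F.downward K hK J hsub)
  compat := by
    rintro J₁ ⟨K₁, ⟨_, hK₁⟩, h₁⟩ J₂ ⟨K₂, ⟨_, hK₂⟩, h₂⟩ h12
    exact D.compat J₁ (D.F.downward K₁ hK₁ J₁ h₁) J₂ (D.F.downward K₂ hK₂ J₂ h₂) h12

/-- A special polyhedra system is consistent if for each connected component `C`
of its singular locus there is a stratum having maximal contact with `Red_C(D)`
(non-singular systems are consistent by convention). -/
def IsConsistent (D : PolySys) : Prop :=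
  ∀ x ∈ Sing D, ∃ T, HasMaximalContact (D.red (connectedComponentIn (Sing D) x)) T

/-! ### Fitting and Spivakovsky's invariant -/

/-- The fitting vector `w_Δ(j) = min {σ(j) : σ ∈ Δ}`. -/
noncomputable def fitVec (Δ : Set Vec) : Vec := fun j => sInf ((fun σ => σ j) '' Δ)

/-- The fitting `Δ̃ = Δ - w_Δ`. -/
noncomputable def fitting (Δ : Set Vec) : Set Vec := (fun σ => σ - fitVec Δ) '' Δ

/-- Spivakovsky's invariant `Spi_D = max {δ(Δ̃_J) : J ∈ Sing(D)}`. -/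
noncomputable def spi (D : PolySys) : ℝ :=
  sSup {x | ∃ J ∈ Sing D, contactExp J (fitting (D.Δ J)) = x}

/-- `S(D) = {J ∈ Sing(D) : δ(Δ̃_J) = Spi_D}`. -/
def SSet (D : PolySys) : Set (Finset ℕ) :=
  {J | J ∈ Sing D ∧ contactExp J (fitting (D.Δ J)) = spi D}

/-! ### Moderated transforms, normal crossings, quasi-ordinary systems -/

/-- The polyhedron of the `d`-moderated transform `Θ^d_J(N) = N(Λ_J(N/d))`
at a stratum `J'` of the blow-up. -/
noncomputable def modΔ (N : PolySys) (d : ℕ) (J : Finset ℕ) (inf : ℕ) (J' : Finset ℕ) :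
    Set Vec :=
  if inf ∈ J' then
    (fun σ => σ - (d : ℝ) • eVec inf) ''
      posHull J' (lamMap J J' inf '' N.Δ (blowdown J inf J'))
  else N.Δ J'

/-- `N'` is the `d`-moderated transform `Θ^d_J(N)` of the Newton polyhedra system `N`
centered in a stratum `J` with `δ(N_J) ≥ d`, with new index `inf`. -/
def IsModTransformAt (N N' : PolySys) (d : ℕ) (J : Finset ℕ) (inf : ℕ) : Prop :=
  N.d = 1 ∧ N'.d = 1 ∧ J ∈ N.F.H ∧ (d : ℝ) ≤ contactExp J (N.Δ J) ∧ inf ∉ N.F.I ∧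
  N'.F.I = insert inf N.F.I ∧ N'.F.H = blowupH N.F.H J inf ∧
  ∀ J' ∈ N'.F.H, N'.Δ J' = modΔ N d J inf J'

/-- `N'` is a `d`-moderated transform of `N` centered in `J`. -/
def IsModTransform (N N' : PolySys) (d : ℕ) (J : Finset ℕ) : Prop :=
  ∃ inf, IsModTransformAt N N' d J inf

/-- A Newton polyhedra system has normal crossings if each polyhedron has a
single vertex. -/
def HasNormalCrossings (D : PolySys) : Prop :=
  ∀ J ∈ D.F.H, ∃ σ, D.Δ J = posHull J {σ}

/-- `D` is Hironaka quasi-ordinary: each polyhedron over a singular stratum has a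
single vertex. -/
def IsQuasiOrdinary (D : PolySys) : Prop :=
  ∀ J ∈ Sing D, ∃ σ, D.Δ J = posHull J {σ}

/-! ### Lexicographic order on sequences of naturals -/

/-- Strict lexicographic order on sequences `ℕ → ℕ`. -/
def LexLt (φ ψ : ℕ → ℕ) : Prop := ∃ n, φ n < ψ n ∧ ∀ m < n, φ m = ψ m

/-- A weakly decreasing sequence of naturals. -/
def WeaklyDecr (φ : ℕ → ℕ) : Prop := ∀ n, φ (n + 1) ≤ φ n

/-! ### S1: cones and hulls -/

lemma mem_suppCone {J : Finset ℕ} {σ : Vec} :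
    σ ∈ suppCone J ↔ (∀ j, 0 ≤ σ j) ∧ ∀ j, j ∉ J → σ j = 0 := Iff.rfl

lemma suppCone_zero (J : Finset ℕ) : (0 : Vec) ∈ suppCone J :=
  ⟨fun _ => le_refl _, fun _ _ => rfl⟩

lemma suppCone_add {J : Finset ℕ} {x y : Vec} (hx : x ∈ suppCone J) (hy : y ∈ suppCone J) :
    x + y ∈ suppCone J :=
  ⟨fun j => add_nonneg (hx.1 j) (hy.1 j), fun j hj => by
    simp [Pi.add_apply, hx.2 j hj, hy.2 j hj]⟩

lemma suppCone_smul {J : Finset ℕ} {c : ℝ} (hc : 0 ≤ c) {x : Vec} (hx : x ∈ suppCone J) :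
    c • x ∈ suppCone J :=
  ⟨fun j => mul_nonneg hc (hx.1 j), fun j hj => by simp [Pi.smul_apply, hx.2 j hj]⟩

lemma suppCone_mono {J J' : Finset ℕ} (h : J ⊆ J') : suppCone J ⊆ suppCone J' :=
  fun _ hx => ⟨hx.1, fun j hj => hx.2 j (fun hjJ => hj (h hjJ))⟩

lemma suppCone_convex (J : Finset ℕ) : Convex ℝ (suppCone J) := by
  intro x hx y hy a b ha hb _
  exact suppCone_add (suppCone_smul ha hx) (suppCone_smul hb hy)

lemma suppCone_add_self (J : Finset ℕ) : suppCone J + suppCone J = suppCone J := by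
  apply Set.Subset.antisymm
  · rintro z ⟨x, hx, y, hy, rfl⟩; exact suppCone_add hx hy
  · intro x hx; exact ⟨x, hx, 0, suppCone_zero J, by simp⟩

lemma posHull_eq_add (J : Finset ℕ) (A : Set Vec) :
    posHull J A = convexHull ℝ A + suppCone J := by
  rw [posHull, convexHull_add, (suppCone_convex J).convexHull_eq]

lemma image_sub_eq (e : Vec) (X : Set Vec) :
    (fun σ => σ - e) '' X = X + {-e} := by
  ext z
  constructor
  · rintro ⟨x, hx, rfl⟩; exact ⟨x, hx, -e, rfl, sub_eq_add_neg x e⟩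
  · rintro ⟨x, hx, y, hy, rfl⟩
    rcases Set.mem_singleton_iff.mp hy with rfl
    exact ⟨x, hx, (sub_eq_add_neg x e).symm⟩

lemma linimage_add {f : Vec → Vec} (hf : IsLinearMap ℝ f) (X Y : Set Vec) :
    f '' (X + Y) = f '' X + f '' Y := by
  ext z
  constructor
  · rintro ⟨w, ⟨x, hx, y, hy, rfl⟩, rfl⟩
    exact ⟨f x, ⟨x, hx, rfl⟩, f y, ⟨y, hy, rfl⟩, (hf.map_add x y).symm⟩
  · rintro ⟨_, ⟨x, hx, rfl⟩, _, ⟨y, hy, rfl⟩, rfl⟩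
    exact ⟨x + y, ⟨x, hx, y, hy, rfl⟩, hf.map_add x y⟩

/-- restriction map, written exactly as in `PolySys.compat`. -/
lemma res_isLinear (J : Finset ℕ) :
    IsLinearMap ℝ (fun σ : Vec => fun j => if j ∈ J then σ j else 0) := by
  constructor
  · intro x y; funext j; by_cases h : j ∈ J <;> simp [h]
  · intro c x; funext j; by_cases h : j ∈ J <;> simp [h]
/-! ### S2: polyhedra systems basics -/

lemma latticePts_subset_suppCone (J : Finset ℕ) (d : ℕ) : latticePts J d ⊆ suppCone J :=
  fun _ h => h.1

lemma charPoly_eq {J : Finset ℕ} {d : ℕ} {Δ : Set Vec} (h : IsCharPoly J d Δ) :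
    ∃ A, A ⊆ latticePts J d ∧ Δ = convexHull ℝ A + suppCone J := by
  obtain ⟨A, hA, rfl⟩ := h
  exact ⟨A, hA, posHull_eq_add J A⟩

lemma charPoly_subset_suppCone {J : Finset ℕ} {d : ℕ} {Δ : Set Vec} (h : IsCharPoly J d Δ) :
    Δ ⊆ suppCone J := by
  obtain ⟨A, hA, rfl⟩ := charPoly_eq h
  rintro σ ⟨x, hx, y, hy, rfl⟩
  have hxs : x ∈ suppCone J := by
    have : convexHull ℝ A ⊆ suppCone J := by
      rw [← (suppCone_convex J).convexHull_eq]
      exact convexHull_mono (fun a ha => (hA ha).1)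
    exact this hx
  exact suppCone_add hxs hy

lemma charPoly_convex {J : Finset ℕ} {d : ℕ} {Δ : Set Vec} (h : IsCharPoly J d Δ) :
    Convex ℝ Δ := by
  obtain ⟨A, hA, rfl⟩ := charPoly_eq h
  exact (convex_convexHull ℝ A).add (suppCone_convex J)

lemma charPoly_addCone {J : Finset ℕ} {d : ℕ} {Δ : Set Vec} (h : IsCharPoly J d Δ)
    {σ c : Vec} (hσ : σ ∈ Δ) (hc : c ∈ suppCone J) : σ + c ∈ Δ := by
  obtain ⟨A, hA, rfl⟩ := charPoly_eq h
  obtain ⟨x, hx, y, hy, rfl⟩ := hσ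
  exact ⟨x, hx, y + c, suppCone_add hy hc, (add_assoc x y c).symm⟩

lemma sys_supp (D : PolySys) {J : Finset ℕ} (hJ : J ∈ D.F.H) : D.Δ J ⊆ suppCone J :=
  charPoly_subset_suppCone (D.char J hJ)

lemma sys_convex (D : PolySys) {J : Finset ℕ} (hJ : J ∈ D.F.H) : Convex ℝ (D.Δ J) :=
  charPoly_convex (D.char J hJ)

lemma sys_addCone (D : PolySys) {J : Finset ℕ} (hJ : J ∈ D.F.H) {σ c : Vec}
    (hσ : σ ∈ D.Δ J) (hc : c ∈ suppCone J) : σ + c ∈ D.Δ J :=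
  charPoly_addCone (D.char J hJ) hσ hc

lemma sums_bddBelow {J : Finset ℕ} {Δ : Set Vec} (hs : Δ ⊆ suppCone J) :
    BddBelow ((fun σ => ∑ j ∈ J, σ j) '' Δ) := by
  refine ⟨0, ?_⟩
  rintro x ⟨σ, hσ, rfl⟩
  exact Finset.sum_nonneg fun j _ => (hs hσ).1 j

lemma contactExp_le {J : Finset ℕ} {Δ : Set Vec} (hJ : J ≠ ∅) (hs : Δ ⊆ suppCone J)
    {σ : Vec} (hσ : σ ∈ Δ) : contactExp J Δ ≤ ∑ j ∈ J, σ j := by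
  rw [contactExp, if_neg hJ]
  exact csInf_le (sums_bddBelow hs) ⟨σ, hσ, rfl⟩

lemma le_contactExp {J : Finset ℕ} {Δ : Set Vec} (hJ : J ≠ ∅) (hne : Δ.Nonempty)
    {c : ℝ} (h : ∀ σ ∈ Δ, c ≤ ∑ j ∈ J, σ j) : c ≤ contactExp J Δ := by
  rw [contactExp, if_neg hJ]
  exact le_csInf (hne.image _) (by rintro x ⟨σ, hσ, rfl⟩; exact h σ hσ)

lemma sing_ne_empty {D : PolySys} {J : Finset ℕ} (hJ : J ∈ Sing D) : J ≠ ∅ := by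
  intro h
  have := hJ.2
  rw [contactExp, if_pos h] at this
  linarith

/-- key: sums over a singular stratum `J ⊆ K` are at least 1 on `Δ_K`. -/
lemma sum_ge_one_of_sing (D : PolySys) {J K : Finset ℕ} (hJ : J ∈ Sing D)
    (hK : K ∈ D.F.H) (hJK : J ⊆ K) {σ : Vec} (hσ : σ ∈ D.Δ K) :
    1 ≤ ∑ j ∈ J, σ j := by
  have hcompat := D.compat J hJ.1 K hK hJK
  have hres : (fun j => if j ∈ J then σ j else 0) ∈ D.Δ J := by
    rw [hcompat]; exact ⟨σ, hσ, rfl⟩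
  have hsum : ∑ j ∈ J, (if j ∈ J then σ j else 0) = ∑ j ∈ J, σ j :=
    Finset.sum_congr rfl fun j hj => if_pos hj
  calc (1 : ℝ) ≤ contactExp J (D.Δ J) := hJ.2
    _ ≤ ∑ j ∈ J, (if j ∈ J then σ j else 0) :=
        contactExp_le (sing_ne_empty hJ) (sys_supp D hJ.1) hres
    _ = ∑ j ∈ J, σ j := hsum

lemma sing_contact_ge (D : PolySys) {J K : Finset ℕ} (hJ : J ∈ Sing D)
    (hK : K ∈ D.F.H) (hJK : J ⊆ K) : K ∈ Sing D := by
  refine ⟨hK, ?_⟩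
  refine le_contactExp (fun h => by simp [h, Finset.subset_empty] at hJK; exact sing_ne_empty hJ hJK) (D.nonempty K hK) ?_
  intro σ hσ
  calc (1:ℝ) ≤ ∑ j ∈ J, σ j := sum_ge_one_of_sing D hJ hK hJK hσ
    _ ≤ ∑ j ∈ K, σ j := Finset.sum_le_sum_of_subset_of_nonneg hJK
        (fun j _ _ => (sys_supp D hK hσ).1 j)
/-! ### S3: blow-up machinery -/

/-- restriction of a vector to a stratum -/
def resV (J : Finset ℕ) (σ : Vec) : Vec := fun j => if j ∈ J then σ j else 0

lemma resV_isLinear (J : Finset ℕ) : IsLinearMap ℝ (resV J) := res_isLinear J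

lemma sys_res (D : PolySys) {J₁ J₂ : Finset ℕ} (h₁ : J₁ ∈ D.F.H) (h₂ : J₂ ∈ D.F.H)
    (h12 : J₁ ⊆ J₂) : resV J₁ '' D.Δ J₂ = D.Δ J₁ :=
  (D.compat J₁ h₁ J₂ h₂ h12).symm

lemma sys_add_stable (D : PolySys) {J : Finset ℕ} (hJ : J ∈ D.F.H) :
    D.Δ J + suppCone J = D.Δ J := by
  apply Set.Subset.antisymm
  · rintro z ⟨x, hx, y, hy, rfl⟩; exact sys_addCone D hJ hx hy
  · intro x hx; exact ⟨x, hx, 0, suppCone_zero J, by simp⟩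

lemma absorb_suppCone {J : Finset ℕ} {X : Set Vec} (hX : X ⊆ suppCone J)
    (h0 : (0 : Vec) ∈ X) : X + suppCone J = suppCone J := by
  apply Set.Subset.antisymm
  · rintro z ⟨x, hx, y, hy, rfl⟩; exact suppCone_add (hX hx) hy
  · intro c hc; exact ⟨0, h0, c, hc, by simp⟩

lemma lam_isLinear (J J' : Finset ℕ) (inf : ℕ) : IsLinearMap ℝ (lamMap J J' inf) := by
  constructor
  · intro x y; funext j
    by_cases h : j = inf
    · simp [lamMap, h, Finset.sum_add_distrib]
    · by_cases h' : j ∈ J' <;> simp [lamMap, h, h']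
  · intro c x; funext j
    by_cases h : j = inf
    · simp [lamMap, h, Finset.mul_sum]
    · by_cases h' : j ∈ J' <;> simp [lamMap, h, h']

lemma lam_suppCone_subset {J K J' : Finset ℕ} {inf : ℕ} (hiJ' : inf ∈ J') :
    lamMap J J' inf '' suppCone K ⊆ suppCone J' := by
  rintro _ ⟨σ, hσ, rfl⟩
  constructor
  · intro j
    by_cases h : j = inf
    · simp only [lamMap, if_pos h]
      exact Finset.sum_nonneg fun i _ => hσ.1 i
    · by_cases h' : j ∈ J' <;> simp [lamMap, h, h', hσ.1 j]
  · intro j hj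
    have h : j ≠ inf := fun hh => hj (hh ▸ hiJ')
    simp [lamMap, h, hj]

/-- membership in the sheet `H'_s`. -/
lemma blowup_mem_s {H : Set (Finset ℕ)} {J J' : Finset ℕ} {inf : ℕ}
    (h : J' ∈ blowupH H J inf) (hiJ' : inf ∉ J') : J' ∈ H ∧ ¬J ⊆ J' := by
  rcases h with h | ⟨K, _, A, _, rfl⟩
  · exact h
  · exact absurd (by simp) hiJ'

lemma blowup_mem_of_infty {F : Fabric} {J J' : Finset ℕ} {inf : ℕ}
    (hJF : J ∈ F.H) (hinf : inf ∉ F.I)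
    (h : J' ∈ blowupH F.H J inf) (hiJ' : inf ∈ J') :
    blowdown J inf J' ∈ F.H ∧ J ⊆ blowdown J inf J' ∧ J' ∩ J ⊂ J ∧
      (blowdown J inf J' \ J) ∪ (J' ∩ J) ∪ {inf} = J' := by
  rcases h with ⟨hH, _⟩ | ⟨K, ⟨hK, hJK⟩, A, hA, rfl⟩
  · exact absurd (F.mem_sub J' hH hiJ') (fun hh => hinf hh)
  · have hKI : K ⊆ F.I := F.mem_sub K hK
    have hJI : J ⊆ F.I := F.mem_sub J hJF
    have hiK : inf ∉ K := fun hh => hinf (hKI hh)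
    have hiJ : inf ∉ J := fun hh => hinf (hJI hh)
    have hAJ : A ⊆ J := hA.subset
    have herase : ((K \ J ∪ A) ∪ {inf}).erase inf = K \ J ∪ A := by
      ext x
      simp only [Finset.mem_erase, Finset.mem_union, Finset.mem_singleton, Finset.mem_sdiff]
      constructor
      · rintro ⟨hx, (h | h) | h⟩
        · exact Or.inl h
        · exact Or.inr h
        · exact absurd h hx
      · rintro (h | h)
        · exact ⟨fun hh => hiK (hh ▸ h.1), Or.inl (Or.inl h)⟩
        · exact ⟨fun hh => hiJ (hh ▸ hAJ h), Or.inl (Or.inr h)⟩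
    have hbd : blowdown J inf ((K \ J) ∪ A ∪ {inf}) = K := by
      rw [blowdown, if_pos hiJ', herase]
      ext x
      simp only [Finset.mem_union, Finset.mem_sdiff]
      constructor
      · rintro ((h | h) | h)
        · exact h.1
        · exact hJK (hAJ h)
        · exact hJK h
      · intro hx
        by_cases hxJ : x ∈ J
        · exact Or.inr hxJ
        · exact Or.inl (Or.inl ⟨hx, hxJ⟩)
    have hcap : ((K \ J) ∪ A ∪ {inf}) ∩ J = A := by
      ext x
      simp only [Finset.mem_inter, Finset.mem_union, Finset.mem_sdiff, Finset.mem_singleton]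
      constructor
      · rintro ⟨(⟨_, hx⟩ | hx) | hx, hxJ⟩
        · exact absurd hxJ hx
        · exact hx
        · exact absurd hxJ (hx ▸ hiJ)
      · intro hx
        exact ⟨Or.inl (Or.inr hx), hAJ hx⟩
    refine ⟨hbd.symm ▸ hK, hbd.symm ▸ hJK, ?_, ?_⟩
    · rw [hcap]; exact hA
    · rw [hbd, hcap]

lemma blowdown_eq_of_infty {J J' : Finset ℕ} {inf : ℕ} (hiJ' : inf ∈ J') :
    blowdown J inf J' = J'.erase inf ∪ J := by rw [blowdown, if_pos hiJ']

lemma erase_subset_blowdown {J J' : Finset ℕ} {inf : ℕ} (hiJ' : inf ∈ J') :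
    J'.erase inf ⊆ blowdown J inf J' := by
  rw [blowdown_eq_of_infty hiJ']; exact Finset.subset_union_left

lemma subset_blowdown {J J' : Finset ℕ} {inf : ℕ} (hiJ' : inf ∈ J') :
    J ⊆ blowdown J inf J' := by
  rw [blowdown_eq_of_infty hiJ']; exact Finset.subset_union_right

/-- The blow-up fabric. -/
def blowFab (F : Fabric) (J : Finset ℕ) (inf : ℕ) (hJ : J ∈ F.H) : Fabric where
  I := insert inf F.I
  I_nonempty := ⟨inf, Finset.mem_insert_self _ _⟩
  H := blowupH F.H J inf
  mem_sub := by
    rintro K (⟨hK, _⟩ | ⟨K₀, ⟨hK₀, _⟩, A, hA, rfl⟩)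
    · exact (F.mem_sub K hK).trans (Finset.subset_insert _ _)
    · intro x hx
      simp only [Finset.mem_union, Finset.mem_sdiff, Finset.mem_singleton] at hx
      rcases hx with (⟨hx, _⟩ | hx) | hx
      · exact Finset.mem_insert_of_mem (F.mem_sub K₀ hK₀ hx)
      · exact Finset.mem_insert_of_mem (F.mem_sub J hJ (hA.subset hx))
      · exact hx ▸ Finset.mem_insert_self _ _
  downward := by
    rintro K (⟨hK, hns⟩ | ⟨K₀, ⟨hK₀, hJK₀⟩, A, hA, rfl⟩) K' hK'
    · exact Or.inl ⟨F.downward K hK K' hK', fun hh => hns (hh.trans hK')⟩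
    · by_cases hiK' : inf ∈ K'
      · refine Or.inr ⟨(K' ∩ (K₀ \ J)) ∪ J, ⟨F.downward K₀ hK₀ _ ?_, Finset.subset_union_right⟩,
          K' ∩ A, ?_, ?_⟩
        · exact Finset.union_subset ((Finset.inter_subset_right).trans (Finset.sdiff_subset)) hJK₀
        · exact lt_of_le_of_lt (Finset.inter_subset_right) hA
        · have h1 : (K' ∩ (K₀ \ J) ∪ J) \ J = K' ∩ (K₀ \ J) := by
            ext x
            simp only [Finset.mem_sdiff, Finset.mem_union, Finset.mem_inter]
            constructor
            · rintro ⟨(h | h), hxJ⟩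
              · exact h
              · exact absurd h hxJ
            · rintro ⟨h1, h2, h3⟩
              exact ⟨Or.inl ⟨h1, h2, h3⟩, h3⟩
          rw [h1]
          ext x
          simp only [Finset.mem_union, Finset.mem_inter, Finset.mem_sdiff, Finset.mem_singleton]
          constructor
          · intro hx
            have hx2 := hK' hx
            simp only [Finset.mem_union, Finset.mem_sdiff, Finset.mem_singleton] at hx2
            rcases hx2 with (h | h) | h
            · exact Or.inl (Or.inl ⟨hx, h.1, h.2⟩)
            · exact Or.inl (Or.inr ⟨hx, h⟩)
            · exact Or.inr h
          · rintro ((⟨h, _⟩ | ⟨h, _⟩) | h)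
            · exact h
            · exact h
            · exact h ▸ hiK'
      · have hsub : K' ⊆ K₀ := by
          intro x hx
          have hx2 := hK' hx
          simp only [Finset.mem_union, Finset.mem_sdiff, Finset.mem_singleton] at hx2
          rcases hx2 with (h | h) | h
          · exact h.1
          · exact hJK₀ (hA.subset h)
          · exact absurd (h ▸ hx) hiK'
        refine Or.inl ⟨F.downward K₀ hK₀ K' hsub, fun hh => ?_⟩
        obtain ⟨x, hxJ, hxA⟩ := Finset.exists_of_ssubset hA
        have hx2 := hK' (hh hxJ)
        simp only [Finset.mem_union, Finset.mem_sdiff, Finset.mem_singleton] at hx2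
        rcases hx2 with (h | h) | h
        · exact h.2 hxJ
        · exact hxA h
        · exact hiK' (h ▸ hh hxJ)
/-! ### S4: the characteristic transform as a polyhedra system -/

lemma charDelta_infty (D : PolySys) {J K J' : Finset ℕ} {inf : ℕ}
    (hiJ' : inf ∈ J') (hbd : blowdown J inf J' = K) (hK : K ∈ D.F.H) :
    charΔ D J inf J' = lamMap J J' inf '' D.Δ K + {-eVec inf} + suppCone J' := by
  rw [charΔ, if_pos hiJ', hbd, image_sub_eq, posHull_eq_add,
    ← (lam_isLinear J J' inf).image_convexHull, (sys_convex D hK).convexHull_eq,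
    add_right_comm]

lemma lam_sub_e_lattice {d : ℕ} (hd : 0 < d) {J K J' : Finset ℕ} {inf : ℕ} (hiJ' : inf ∈ J')
    {a : Vec} (ha : a ∈ latticePts K d) (hsum : 1 ≤ ∑ i ∈ J, a i) :
    lamMap J J' inf a - eVec inf ∈ latticePts J' d := by
  obtain ⟨⟨hpos, hsupp⟩, hrat⟩ := ha
  choose m hm using hrat
  have hS : ∑ i ∈ J, a i = ((∑ i ∈ J, m i : ℕ) : ℝ) / d := by
    push_cast
    rw [Finset.sum_div]
    exact Finset.sum_congr rfl fun i _ => hm i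
  have hMd : d ≤ ∑ i ∈ J, m i := by
    by_contra hlt
    push_neg at hlt
    have : ((∑ i ∈ J, m i : ℕ) : ℝ) / d < 1 := by
      rw [div_lt_one (by exact_mod_cast hd)]
      exact_mod_cast hlt
    rw [hS] at hsum; linarith
  refine ⟨⟨?_, ?_⟩, ?_⟩
  · intro j
    by_cases hj : j = inf
    · subst hj
      simp only [Pi.sub_apply, lamMap, eVec, eq_self_iff_true, if_true]
      linarith
    · simp only [Pi.sub_apply, lamMap, eVec, if_neg hj]
      by_cases hj' : j ∈ J' <;> simp [hj', hpos j]
  · intro j hj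
    have hji : j ≠ inf := fun h => hj (h ▸ hiJ')
    simp [Pi.sub_apply, lamMap, eVec, hji, hj]
  · intro j
    by_cases hj : j = inf
    · subst hj
      refine ⟨∑ i ∈ J, m i - d, ?_⟩
      simp only [Pi.sub_apply, lamMap, eVec, eq_self_iff_true, if_true]
      rw [hS, Nat.cast_sub hMd]
      have hd' : (d : ℝ) ≠ 0 := by exact_mod_cast hd.ne'
      field_simp
    · by_cases hj' : j ∈ J'
      · refine ⟨m j, ?_⟩
        simp [Pi.sub_apply, lamMap, eVec, hj, hj', hm j]
      · refine ⟨0, ?_⟩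
        simp [Pi.sub_apply, lamMap, eVec, hj, hj']

lemma resV_lam_not_inf {J J₁ J₂ : Finset ℕ} {inf : ℕ} (h12 : J₁ ⊆ J₂) (hiJ₁ : inf ∉ J₁)
    (σ : Vec) : resV J₁ (lamMap J J₂ inf σ) = resV J₁ σ := by
  funext j
  by_cases hj : j ∈ J₁
  · have hji : j ≠ inf := fun h => hiJ₁ (h ▸ hj)
    simp [resV, lamMap, hj, hji, h12 hj]
  · simp [resV, hj]

lemma resV_lam_inf {J J₁ J₂ : Finset ℕ} {inf : ℕ} (h12 : J₁ ⊆ J₂) (hiJ₁ : inf ∈ J₁)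
    (σ : Vec) :
    resV J₁ (lamMap J J₂ inf σ) = lamMap J J₁ inf (resV (blowdown J inf J₁) σ) := by
  funext j
  by_cases hj : j = inf
  · subst hj
    simp only [resV, lamMap, if_pos hiJ₁, if_pos rfl]
    exact Finset.sum_congr rfl fun i hi => (if_pos (subset_blowdown hiJ₁ hi)).symm
  · by_cases hj' : j ∈ J₁
    · have hjK : j ∈ blowdown J inf J₁ :=
        erase_subset_blowdown hiJ₁ (Finset.mem_erase.mpr ⟨hj, hj'⟩)
      simp [resV, lamMap, hj, hj', h12 hj', hjK]
    · simp [resV, lamMap, hj, hj']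

lemma resV_suppCone {J₁ J₂ : Finset ℕ} (h12 : J₁ ⊆ J₂) :
    resV J₁ '' suppCone J₂ = suppCone J₁ := by
  apply Set.Subset.antisymm
  · rintro _ ⟨σ, hσ, rfl⟩
    constructor
    · intro j; by_cases hj : j ∈ J₁ <;> simp [resV, hj, hσ.1 j]
    · intro j hj; simp [resV, hj]
  · intro τ hτ
    refine ⟨τ, suppCone_mono h12 hτ, ?_⟩
    funext j
    by_cases hj : j ∈ J₁
    · simp [resV, hj]
    · simp [resV, hj, hτ.2 j hj]

lemma resV_self {J : Finset ℕ} {σ : Vec} (h : ∀ j, j ∉ J → σ j = 0) : resV J σ = σ := by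
  funext j
  by_cases hj : j ∈ J
  · simp [resV, hj]
  · simp [resV, hj, h j hj]

lemma resV_e_not {J₁ : Finset ℕ} {inf : ℕ} (hiJ₁ : inf ∉ J₁) : resV J₁ (eVec inf) = 0 := by
  funext j
  by_cases hj : j ∈ J₁
  · have : j ≠ inf := fun h => hiJ₁ (h ▸ hj)
    simp [resV, eVec, hj, this]
  · simp [resV, hj]

lemma resV_e_mem {J₁ : Finset ℕ} {inf : ℕ} (hiJ₁ : inf ∈ J₁) : resV J₁ (eVec inf) = eVec inf := by
  funext j
  by_cases hj : j ∈ J₁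
  · simp [resV, hj]
  · have : j ≠ inf := fun h => hj (h ▸ hiJ₁)
    simp [resV, eVec, hj, this]

/-- The characteristic transform `Λ_J(D)` as a polyhedra system. -/
noncomputable def charSys (D : PolySys) (J : Finset ℕ) (inf : ℕ)
    (hJ : J ∈ Sing D) (hinf : inf ∉ D.F.I) : PolySys where
  F := blowFab D.F J inf hJ.1
  d := D.d
  d_pos := D.d_pos
  Δ := charΔ D J inf
  char := by
    intro J' hJ'
    by_cases hiJ' : inf ∈ J'
    · obtain ⟨hKmem, hJK, _, _⟩ := blowup_mem_of_infty hJ.1 hinf hJ' hiJ'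
      obtain ⟨A, hA, hΔ⟩ := charPoly_eq (D.char _ hKmem)
      refine ⟨(fun a => lamMap J J' inf a - eVec inf) '' A, ?_, ?_⟩
      · rintro _ ⟨a, haA, rfl⟩
        refine lam_sub_e_lattice D.d_pos hiJ' (hA haA) ?_
        have haΔ : a ∈ D.Δ (blowdown J inf J') := by
          rw [hΔ]; exact ⟨a, subset_convexHull ℝ A haA, 0, suppCone_zero _, by simp⟩
        exact sum_ge_one_of_sing D hJ hKmem hJK haΔ
      · rw [posHull_eq_add, charDelta_infty D hiJ' rfl hKmem]
        have h1 : (fun a => lamMap J J' inf a - eVec inf) '' A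
            = (fun σ => σ - eVec inf) '' (lamMap J J' inf '' A) := by
          rw [Set.image_image]
        rw [h1, image_sub_eq, convexHull_add, convexHull_singleton, hΔ,
          linimage_add (lam_isLinear J J' inf),
          (lam_isLinear J J' inf).image_convexHull]
        have habs : lamMap J J' inf '' suppCone (blowdown J inf J') + suppCone J'
            = suppCone J' :=
          absorb_suppCone (lam_suppCone_subset hiJ')
            ⟨0, suppCone_zero _, (lam_isLinear J J' inf).map_zero⟩
        rw [add_right_comm (convexHull ℝ (lamMap J J' inf '' A))
            (lamMap J J' inf '' suppCone (blowdown J inf J')) ({-eVec inf}),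
          add_assoc (convexHull ℝ (lamMap J J' inf '' A) + {-eVec inf}), habs]
    · have hmem := blowup_mem_s hJ' hiJ'
      rw [charΔ, if_neg hiJ']
      exact D.char J' hmem.1
  nonempty := by
    intro J' hJ'
    by_cases hiJ' : inf ∈ J'
    · obtain ⟨hKmem, hJK, _, _⟩ := blowup_mem_of_infty hJ.1 hinf hJ' hiJ'
      obtain ⟨σ, hσ⟩ := D.nonempty _ hKmem
      rw [charDelta_infty D hiJ' rfl hKmem]
      exact ⟨lamMap J J' inf σ + -eVec inf + 0,
        ⟨lamMap J J' inf σ + -eVec inf, ⟨lamMap J J' inf σ, ⟨σ, hσ, rfl⟩, -eVec inf, rfl, rfl⟩,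
          0, suppCone_zero _, rfl⟩⟩
    · rw [charΔ, if_neg hiJ']
      exact D.nonempty J' (blowup_mem_s hJ' hiJ').1
  compat := by
    intro J₁ hJ₁ J₂ hJ₂ h12
    show charΔ D J inf J₁ = resV J₁ '' charΔ D J inf J₂
    have hinfJ : inf ∉ J := fun hh => hinf (D.F.mem_sub J hJ.1 hh)
    by_cases hiJ₂ : inf ∈ J₂
    · obtain ⟨hK₂, hJK₂, _, _⟩ := blowup_mem_of_infty hJ.1 hinf hJ₂ hiJ₂
      by_cases hiJ₁ : inf ∈ J₁
      · obtain ⟨hK₁, hJK₁, _, _⟩ := blowup_mem_of_infty hJ.1 hinf hJ₁ hiJ₁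
        have hKK : blowdown J inf J₁ ⊆ blowdown J inf J₂ := by
          rw [blowdown_eq_of_infty hiJ₁, blowdown_eq_of_infty hiJ₂]
          exact Finset.union_subset_union (Finset.erase_subset_erase _ h12) (subset_refl J)
        rw [charDelta_infty D hiJ₁ rfl hK₁, charDelta_infty D hiJ₂ rfl hK₂,
          linimage_add (resV_isLinear J₁), linimage_add (resV_isLinear J₁),
          Set.image_singleton, (resV_isLinear J₁).map_neg, resV_e_mem hiJ₁,
          resV_suppCone h12, Set.image_image,
          ← sys_res D hK₁ hK₂ hKK, Set.image_image]
        congr 2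
        exact Set.image_congr fun σ _ => (resV_lam_inf (J := J) h12 hiJ₁ σ).symm
      · have hmem₁ := blowup_mem_s hJ₁ hiJ₁
        have hsub : J₁ ⊆ blowdown J inf J₂ := by
          refine (Finset.subset_erase.mpr ⟨h12, hiJ₁⟩).trans (erase_subset_blowdown hiJ₂)
        rw [charΔ, if_neg hiJ₁, charDelta_infty D hiJ₂ rfl hK₂,
          linimage_add (resV_isLinear J₁), linimage_add (resV_isLinear J₁),
          Set.image_singleton, (resV_isLinear J₁).map_neg, resV_e_not hiJ₁, neg_zero,
          resV_suppCone h12, Set.image_image]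
        have himg : (fun σ => resV J₁ (lamMap J J₂ inf σ)) '' D.Δ (blowdown J inf J₂)
            = D.Δ J₁ := by
          rw [← sys_res D hmem₁.1 hK₂ hsub]
          exact Set.image_congr fun σ _ => resV_lam_not_inf h12 hiJ₁ σ
        rw [himg, Set.singleton_zero, add_zero, sys_add_stable D hmem₁.1]
    · have hiJ₁ : inf ∉ J₁ := fun h => hiJ₂ (h12 h)
      have hmem₁ := blowup_mem_s hJ₁ hiJ₁
      have hmem₂ := blowup_mem_s hJ₂ hiJ₂
      rw [charΔ, if_neg hiJ₁, charΔ, if_neg hiJ₂]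
      exact D.compat J₁ hmem₁.1 J₂ hmem₂.1 h12

lemma charSys_isCharTransformAt (D : PolySys) (J : Finset ℕ) (inf : ℕ)
    (hJ : J ∈ Sing D) (hinf : inf ∉ D.F.I) :
    IsCharTransformAt D (charSys D J inf hJ hinf) J inf :=
  ⟨hJ, rfl, hinf, rfl, rfl, fun _ _ => rfl⟩
/-! ### S5: the projection relation and the singular locus correspondence -/

/-- The relation `E = D^T` together with maximal contact data. -/
structure Spec (D E : PolySys) (T : Finset ℕ) : Prop where
  Tmem : T ∈ D.F.H
  Tns : T ∉ Sing D
  mc : ∀ J ∈ Sing D, ↑T ⊆ strictTangent J (D.Δ J)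
  Ieq : E.F.I = D.F.I \ T
  Heq : E.F.H = projH D.F T
  Δeq : ∀ J' ∈ E.F.H, E.Δ J' = projΔ D T J'

lemma strictTangent_subset (D : PolySys) {J : Finset ℕ} (hJ : J ∈ D.F.H) :
    strictTangent J (D.Δ J) ⊆ ↑J := by
  rintro j ⟨σ, hσ, _, hj⟩
  by_contra hjJ
  exact hj ((sys_supp D hJ hσ).2 j (fun h => hjJ (Finset.mem_coe.mpr h)))

lemma spec_T_subset {D E : PolySys} {T : Finset ℕ} (hs : Spec D E T) {J : Finset ℕ}
    (hJ : J ∈ Sing D) : T ⊆ J := fun j hj =>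
  Finset.mem_coe.mp (strictTangent_subset D hJ.1 (hs.mc J hJ (Finset.mem_coe.mpr hj)))

lemma spec_exists_lt_one {D E : PolySys} {T : Finset ℕ} (hs : Spec D E T) {K : Finset ℕ}
    (hK : K ∈ D.F.H) (hTK : T ⊆ K) : ∃ σ ∈ D.Δ K, ∑ i ∈ T, σ i < 1 := by
  by_contra h
  push_neg at h
  rcases Finset.eq_empty_or_nonempty T with hT | hT
  · obtain ⟨σ, hσ⟩ := D.nonempty K hK
    have := h σ hσ
    rw [hT] at this
    simp at this
    linarith
  · refine hs.Tns ⟨hs.Tmem, ?_⟩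
    refine le_contactExp hT.ne_empty (D.nonempty T hs.Tmem) ?_
    intro σ hσ
    rw [D.compat T hs.Tmem K hK hTK] at hσ
    obtain ⟨τ, hτ, rfl⟩ := hσ
    have : ∑ i ∈ T, (fun j => if j ∈ T then τ j else 0) i = ∑ i ∈ T, τ i :=
      Finset.sum_congr rfl fun i hi => if_pos hi
    rw [this]
    exact h τ hτ

lemma hironakaProj_sum {T U W : Finset ℕ} {σ : Vec} (hW : W ⊆ U \ T) :
    ∑ j ∈ W, hironakaProj T U σ j = (∑ j ∈ W, σ j) / (1 - ∑ i ∈ T, σ i) := by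
  rw [Finset.sum_div]
  exact Finset.sum_congr rfl fun j hj => if_pos (hW hj)

lemma projΔ_supp {D : PolySys} {T J' : Finset ℕ} (hdisj : ∀ j ∈ J', j ∉ T)
    (hU : J' ∪ T ∈ D.F.H) : projΔ D T J' ⊆ suppCone J' := by
  rintro _ ⟨σ, ⟨hσ, hlt⟩, rfl⟩
  have hden : 0 < 1 - ∑ i ∈ T, σ i := by linarith
  constructor
  · intro j
    rw [hironakaProj]
    by_cases hj : j ∈ (J' ∪ T) \ T
    · rw [if_pos hj]
      exact div_nonneg ((sys_supp D hU hσ).1 j) hden.le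
    · rw [if_neg hj]
  · intro j hj
    rw [hironakaProj, if_neg]
    intro hmem
    rcases Finset.mem_sdiff.mp hmem with ⟨hju, hjT⟩
    rcases Finset.mem_union.mp hju with h | h
    · exact hj h
    · exact hjT h

lemma union_sdiff_T {T J' : Finset ℕ} (hdisj : ∀ j ∈ J', j ∉ T) : (J' ∪ T) \ T = J' := by
  ext j
  simp only [Finset.mem_sdiff, Finset.mem_union]
  constructor
  · rintro ⟨h | h, hT⟩
    · exact h
    · exact absurd h hT
  · intro h
    exact ⟨Or.inl h, hdisj j h⟩

/-- forward: the union of a singular stratum of the projection with `T` is singular. -/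
lemma spec_sing_union {D E : PolySys} {T : Finset ℕ} (hs : Spec D E T) {Js : Finset ℕ}
    (hJs : Js ∈ Sing E) : Js ∪ T ∈ Sing D ∧ ∀ j ∈ Js, j ∉ T := by
  have hmem := hJs.1
  rw [hs.Heq] at hmem
  obtain ⟨J₀, ⟨hJ₀, hTJ₀⟩, rfl⟩ := hmem
  have hdisj : ∀ j ∈ J₀ \ T, j ∉ T := fun j hj => (Finset.mem_sdiff.mp hj).2
  have hUT : J₀ \ T ∪ T = J₀ := Finset.sdiff_union_of_subset hTJ₀
  have hJsne : J₀ \ T ≠ ∅ := sing_ne_empty hJs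
  refine ⟨⟨hUT.symm ▸ hJ₀, ?_⟩, hdisj⟩
  rw [hUT]
  have hJ₀ne : J₀ ≠ ∅ := by
    intro h
    exact hJsne (by rw [h]; simp)
  refine le_contactExp hJ₀ne (D.nonempty J₀ hJ₀) ?_
  intro σ hσ
  by_contra hlt
  push_neg at hlt
  have hnn : ∀ j, 0 ≤ σ j := (sys_supp D hJ₀ hσ).1
  have ht : ∑ i ∈ T, σ i < 1 := by
    calc ∑ i ∈ T, σ i ≤ ∑ i ∈ J₀, σ i :=
          Finset.sum_le_sum_of_subset_of_nonneg hTJ₀ (fun j _ _ => hnn j)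
      _ < 1 := hlt
  have hden : 0 < 1 - ∑ i ∈ T, σ i := by linarith
  -- the projected point has small sum
  have hproj : hironakaProj T (J₀ \ T ∪ T) σ ∈ projΔ D T (J₀ \ T) := by
    refine ⟨σ, ⟨?_, ht⟩, rfl⟩
    rw [hUT]; exact hσ
  have hsum : ∑ j ∈ J₀ \ T, hironakaProj T (J₀ \ T ∪ T) σ j
      = (∑ j ∈ J₀ \ T, σ j) / (1 - ∑ i ∈ T, σ i) := by
    refine hironakaProj_sum ?_
    rw [hUT]
  have hslt : (∑ j ∈ J₀ \ T, σ j) / (1 - ∑ i ∈ T, σ i) < 1 := by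
    rw [div_lt_one hden, Finset.sum_sdiff_eq_sub hTJ₀]
    linarith
  have h1 : (1 : ℝ) ≤ contactExp (J₀ \ T) (projΔ D T (J₀ \ T)) := by
    have := hJs.2
    rwa [hs.Δeq _ hJs.1] at this
  have hle := contactExp_le hJsne
    (by
      refine projΔ_supp hdisj ?_
      rw [hUT]; exact hJ₀) hproj
  rw [hsum] at hle
  linarith

/-- backward: projections of singular strata are singular. -/
lemma spec_sing_sdiff {D E : PolySys} {T : Finset ℕ} (hs : Spec D E T) {J : Finset ℕ}
    (hJ : J ∈ Sing D) : J \ T ∈ Sing E := by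
  have hTJ : T ⊆ J := spec_T_subset hs hJ
  have hdisj : ∀ j ∈ J \ T, j ∉ T := fun j hj => (Finset.mem_sdiff.mp hj).2
  have hUT : J \ T ∪ T = J := Finset.sdiff_union_of_subset hTJ
  have hne : J \ T ≠ ∅ := by
    intro h
    have : J ⊆ T := by
      intro x hx
      by_contra hxT
      exact (Finset.notMem_empty x) (h ▸ Finset.mem_sdiff.mpr ⟨hx, hxT⟩)
    exact hs.Tns ((Finset.Subset.antisymm this hTJ) ▸ hJ)
  have hmem : J \ T ∈ E.F.H := by
    rw [hs.Heq]; exact ⟨J, ⟨hJ.1, hTJ⟩, rfl⟩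
  obtain ⟨σ₀, hσ₀, hlt₀⟩ := spec_exists_lt_one hs hJ.1 hTJ
  refine ⟨hmem, ?_⟩
  rw [hs.Δeq _ hmem]
  have hnonempty : (projΔ D T (J \ T)).Nonempty := by
    refine ⟨hironakaProj T (J \ T ∪ T) σ₀, σ₀, ⟨?_, hlt₀⟩, rfl⟩
    rw [hUT]; exact hσ₀
  refine le_contactExp hne hnonempty ?_
  rintro _ ⟨σ, ⟨hσ, hlt⟩, rfl⟩
  rw [hUT] at hσ
  have hden : 0 < 1 - ∑ i ∈ T, σ i := by linarith
  have hsum : ∑ j ∈ J \ T, hironakaProj T (J \ T ∪ T) σ j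
      = (∑ j ∈ J \ T, σ j) / (1 - ∑ i ∈ T, σ i) := by
    refine hironakaProj_sum ?_
    rw [hUT]
  rw [hsum, le_div_iff₀ hden, one_mul, Finset.sum_sdiff_eq_sub hTJ]
  have : 1 ≤ ∑ j ∈ J, σ j := sum_ge_one_of_sing D hJ hJ.1 (subset_refl J) hσ
  linarith

lemma spec_sing_empty {D E : PolySys} {T : Finset ℕ} (hs : Spec D E T)
    (hE : Sing E = ∅) : Sing D = ∅ := by
  ext J
  simp only [Set.mem_empty_iff_false, iff_false]
  intro hJ
  have := spec_sing_sdiff hs hJ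
  rw [hE] at this
  exact this
/-! ### S6a: commutation of blow-up and projection, fabric level -/

lemma proj_blowup_H {F : Fabric} {T Js : Finset ℕ} {inf : ℕ}
    (hTH : T ∈ F.H) (hdisjJs : ∀ j ∈ Js, j ∉ T) (hinf : inf ∉ F.I)
    (hJH : Js ∪ T ∈ F.H) :
    blowupH (projH F T) Js inf
      = {J'' | ∃ J', (J' ∈ blowupH F.H (Js ∪ T) inf ∧ T ⊆ J') ∧ J'' = J' \ T} := by
  have hTI : T ⊆ F.I := F.mem_sub T hTH
  have hJI : Js ∪ T ⊆ F.I := F.mem_sub _ hJH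
  have hinfT : inf ∉ T := fun h => hinf (hTI h)
  ext x
  constructor
  · rintro (⟨hx, hns⟩ | ⟨Ks, ⟨hKs, hJsKs⟩, As, hAs, rfl⟩)
    · -- sheet case
      obtain ⟨K, ⟨hK, hTK⟩, rfl⟩ := hx
      refine ⟨K, ⟨Or.inl ⟨hK, ?_⟩, hTK⟩, rfl⟩
      intro hJK
      refine hns ?_
      intro j hj
      exact Finset.mem_sdiff.mpr ⟨hJK (Finset.mem_union_left T hj), hdisjJs j hj⟩
    · -- infinity case
      obtain ⟨K, ⟨hK, hTK⟩, rfl⟩ := hKs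
      have hJsK : Js ⊆ K := fun j hj => (Finset.mem_sdiff.mp (hJsKs hj)).1
      have hAsJs : As ⊆ Js := hAs.subset
      have hdisjAs : ∀ j ∈ As, j ∉ T := fun j hj => hdisjJs j (hAsJs hj)
      refine ⟨(K \ (Js ∪ T)) ∪ (As ∪ T) ∪ {inf}, ⟨Or.inr ⟨K, ⟨hK, ?_⟩, As ∪ T, ?_, rfl⟩, ?_⟩, ?_⟩
      · exact Finset.union_subset hJsK hTK
      · rw [Finset.ssubset_iff_of_subset
          (Finset.union_subset_union hAsJs (Finset.Subset.refl T))]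
        obtain ⟨y, hyJs, hyAs⟩ := Finset.exists_of_ssubset hAs
        exact ⟨y, Finset.mem_union_left T hyJs,
          fun hy => (Finset.mem_union.mp hy).elim hyAs (hdisjJs y hyJs)⟩
      · intro j hj
        exact Finset.mem_union_left _ (Finset.mem_union_right _ (Finset.mem_union_right As hj))
      · -- (K \ (Js ∪ T) ∪ (As ∪ T) ∪ {inf}) \ T = (K \ T) \ Js ∪ As ∪ {inf}
        ext y
        simp only [Finset.mem_sdiff, Finset.mem_union, Finset.mem_singleton]
        constructor
        · rintro ((⟨⟨hyK, hyT⟩, hyJs⟩ | hyAs) | hyi)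
          · exact ⟨Or.inl (Or.inl ⟨hyK, fun h => h.elim hyJs hyT⟩), hyT⟩
          · exact ⟨Or.inl (Or.inr (Or.inl hyAs)), hdisjAs y hyAs⟩
          · exact ⟨Or.inr hyi, fun h => hinfT (hyi ▸ h)⟩
        · rintro ⟨(⟨hyK, hyJT⟩ | (hyAs | hyT)) | hyi, hyT'⟩
          · push_neg at hyJT
            exact Or.inl (Or.inl ⟨⟨hyK, hyJT.2⟩, hyJT.1⟩)
          · exact Or.inl (Or.inr hyAs)
          · exact absurd hyT hyT'
          · exact Or.inr hyi
  · rintro ⟨J', ⟨hJ'mem, hTJ'⟩, rfl⟩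
    rcases hJ'mem with ⟨hJ'H, hns⟩ | ⟨K, ⟨hK, hJK⟩, A, hA, rfl⟩
    · refine Or.inl ⟨⟨J', ⟨hJ'H, hTJ'⟩, rfl⟩, ?_⟩
      intro hJs
      refine hns ?_
      refine Finset.union_subset (fun j hj => ?_) hTJ'
      exact (Finset.mem_sdiff.mp (hJs hj)).1
    · -- infinity case backwards
      have hKI : K ⊆ F.I := F.mem_sub K hK
      have hiK : inf ∉ K := fun h => hinf (hKI h)
      have hJsK : Js ⊆ K := fun j hj => hJK (Finset.mem_union_left T hj)
      have hTK : T ⊆ K := fun j hj => hJK (Finset.mem_union_right Js hj)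
      have hAJ : A ⊆ Js ∪ T := hA.subset
      have hTA : T ⊆ A := by
        intro j hj
        have hj' := hTJ' hj
        simp only [Finset.mem_union, Finset.mem_sdiff, Finset.mem_singleton] at hj'
        rcases hj' with (⟨_, hnj⟩ | hjA) | hji
        · exact absurd (Or.inr hj) hnj
        · exact hjA
        · exact absurd (hji ▸ hj) hinfT
      refine Or.inr ⟨K \ T, ⟨⟨K, ⟨hK, hTK⟩, rfl⟩, fun j hj =>
          Finset.mem_sdiff.mpr ⟨hJsK hj, hdisjJs j hj⟩⟩, A \ T, ?_, ?_⟩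
      · -- A \ T ⊂ Js
        have hsub : A \ T ⊆ Js := by
          intro j hj
          rcases Finset.mem_sdiff.mp hj with ⟨hjA, hjT⟩
          rcases Finset.mem_union.mp (hAJ hjA) with h | h
          · exact h
          · exact absurd h hjT
        rw [Finset.ssubset_iff_of_subset hsub]
        obtain ⟨y, hyJ, hyA⟩ := Finset.exists_of_ssubset hA
        rcases Finset.mem_union.mp hyJ with hyJs | hyT
        · exact ⟨y, hyJs, fun h => hyA (Finset.mem_sdiff.mp h).1⟩
        · exact absurd (hTA hyT) hyA
      · -- (K \ (Js ∪ T) ∪ A ∪ {inf}) \ T = ((K \ T) \ Js) ∪ (A \ T) ∪ {inf}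
        ext y
        simp only [Finset.mem_sdiff, Finset.mem_union, Finset.mem_singleton]
        constructor
        · rintro ⟨(⟨hyK, hyJT⟩ | hyA) | hyi, hyT⟩
          · push_neg at hyJT
            exact Or.inl (Or.inl ⟨⟨hyK, hyJT.2⟩, hyJT.1⟩)
          · exact Or.inl (Or.inr ⟨hyA, hyT⟩)
          · exact Or.inr hyi
        · rintro ((⟨⟨hyK, hyT⟩, hyJs⟩ | ⟨hyA, hyT⟩) | hyi)
          · exact ⟨Or.inl (Or.inl ⟨hyK, fun h => h.elim hyJs hyT⟩), hyT⟩
          · exact ⟨Or.inl (Or.inr hyA), hyT⟩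
          · exact ⟨Or.inr hyi, fun h => hinfT (hyi ▸ h)⟩
/-! ### S6b: commutation of blow-up and projection, polyhedra level -/

lemma key_ineq {S tσ r : ℝ} (hr : 0 ≤ r) (ht : tσ + r < 1) (htσ : 0 ≤ tσ)
    (hS : 1 - tσ ≤ S) : S / (1 - tσ) ≤ (S - r) / (1 - (tσ + r)) := by
  have h1 : 0 < 1 - tσ := by linarith
  have h2 : 0 < 1 - (tσ + r) := by linarith
  rw [div_le_div_iff₀ h1 h2]
  nlinarith

lemma proj_comm_infty {D E : PolySys} {T : Finset ℕ} (hs : Spec D E T)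
    {Js Ks J'' : Finset ℕ} {inf : ℕ}
    (hJsing : Js ∪ T ∈ Sing D) (hdisjJs : ∀ j ∈ Js, j ∉ T) (hinfD : inf ∉ D.F.I)
    (hKs : Ks ∈ E.F.H) (hJsKs : Js ⊆ Ks) (hi : inf ∈ J'')
    (hrep : (Ks \ Js) ∪ (J'' ∩ Js) ∪ {inf} = J'') (hdisjJ'' : ∀ j ∈ J'', j ∉ T)
    (hinfE : inf ∉ E.F.I) :
    lamMap Js J'' inf '' projΔ D T Ks + {-eVec inf} + suppCone J''
      = hironakaProj T (J'' ∪ T) ''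
          {σ | σ ∈ charΔ D (Js ∪ T) inf (J'' ∪ T) ∧ ∑ i ∈ T, σ i < 1} := by
  classical
  have hKsH := hKs
  rw [hs.Heq] at hKsH
  obtain ⟨K₀, ⟨hK₀H, hTK₀⟩, rfl⟩ := hKsH
  have hKsT : K₀ \ T ∪ T = K₀ := Finset.sdiff_union_of_subset hTK₀
  have hinfT : inf ∉ T := fun h => hinfD (D.F.mem_sub T hs.Tmem h)
  have hiK₀ : inf ∉ K₀ := fun h => hinfD (D.F.mem_sub K₀ hK₀H h)
  have hJK₀ : Js ∪ T ⊆ K₀ :=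
    Finset.union_subset (hJsKs.trans (Finset.sdiff_subset)) hTK₀
  have hUd : (J'' ∪ T) \ T = J'' := union_sdiff_T hdisjJ''
  have hiU : inf ∈ J'' ∪ T := Finset.mem_union_left T hi
  have hTU : T ⊆ J'' ∪ T := Finset.subset_union_right
  have hJ''U : J'' ⊆ J'' ∪ T := Finset.subset_union_left
  have hJ''K : ∀ j ∈ J'', j ≠ inf → j ∈ K₀ \ T := by
    intro j hj hne
    rw [← hrep] at hj
    rcases Finset.mem_union.mp hj with h | h
    · rcases Finset.mem_union.mp h with h' | h'
      · exact (Finset.mem_sdiff.mp h').1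
      · exact hJsKs (Finset.mem_inter.mp h').2
    · exact absurd (Finset.mem_singleton.mp h) hne
  have hTnJ'' : ∀ i ∈ T, i ∉ J'' := fun i hi' hij => hdisjJ'' i hij hi'
  have hdJsT : Disjoint Js T := Finset.disjoint_left.mpr hdisjJs
  have hbdU : blowdown (Js ∪ T) inf (J'' ∪ T) = K₀ := by
    rw [blowdown_eq_of_infty hiU]
    ext y
    simp only [Finset.mem_union, Finset.mem_erase]
    constructor
    · rintro (⟨hyne, hyJ'' | hyT⟩ | hyJs | hyT)
      · exact (Finset.mem_sdiff.mp (hJ''K y hyJ'' hyne)).1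
      · exact hTK₀ hyT
      · exact hJK₀ (Finset.mem_union_left T hyJs)
      · exact hTK₀ hyT
    · intro hy
      have hyne : y ≠ inf := fun h => hiK₀ (h ▸ hy)
      by_cases hyT : y ∈ T
      · exact Or.inr (Or.inr hyT)
      · by_cases hyJs : y ∈ Js
        · exact Or.inr (Or.inl hyJs)
        · have : y ∈ J'' := by
            rw [← hrep]
            exact Finset.mem_union_left _ (Finset.mem_union_left _
              (Finset.mem_sdiff.mpr ⟨Finset.mem_sdiff.mpr ⟨hy, hyT⟩, hyJs⟩))
          exact Or.inl ⟨hyne, Or.inl this⟩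
  have hsumJ : ∀ {σ : Vec}, σ ∈ D.Δ K₀ → 1 ≤ ∑ i ∈ Js ∪ T, σ i := fun hσ =>
    sum_ge_one_of_sing D hJsing hK₀H hJK₀ hσ
  rw [charDelta_infty D hiU hbdU hK₀H]
  simp only [projΔ, hKsT]
  apply Set.Subset.antisymm
  · -- from the transformed projection into the projection of the transform
    rintro x hx
    obtain ⟨w, hw, c, hc, rfl⟩ := hx
    obtain ⟨v, hv, me, hme, rfl⟩ := hw
    obtain ⟨η, hη, rfl⟩ := hv
    obtain ⟨σ, ⟨hσ, htσ⟩, rfl⟩ := hη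
    rcases Set.mem_singleton_iff.mp hme with rfl
    have hnn : ∀ j, 0 ≤ σ j := (sys_supp D hK₀H hσ).1
    set tσ := ∑ i ∈ T, σ i with htσdef
    have hden : 0 < 1 - tσ := by linarith
    set ξ : Vec := lamMap (Js ∪ T) (J'' ∪ T) inf σ + -eVec inf + (1 - tσ) • c with hξdef
    have hξT : ∀ i ∈ T, ξ i = σ i := by
      intro i hiT
      have hine : i ≠ inf := fun h => hinfT (h ▸ hiT)
      have hiU' : i ∈ J'' ∪ T := Finset.mem_union_right J'' hiT
      have hce : c i = 0 := hc.2 i (hTnJ'' i hiT)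
      simp [hξdef, lamMap, eVec, hine, hiU', hce]
    have hξsum : ∑ i ∈ T, ξ i = tσ := Finset.sum_congr rfl hξT
    refine ⟨ξ, ⟨?_, by rw [hξsum]; exact htσ⟩, ?_⟩
    · exact ⟨lamMap (Js ∪ T) (J'' ∪ T) inf σ + -eVec inf,
        ⟨lamMap (Js ∪ T) (J'' ∪ T) inf σ, ⟨σ, hσ, rfl⟩, -eVec inf, rfl, rfl⟩,
        (1 - tσ) • c, suppCone_smul hden.le (suppCone_mono hJ''U hc), rfl⟩
    · funext j
      by_cases hj : j ∈ J''
      · have hjU : j ∈ (J'' ∪ T) \ T := by rw [hUd]; exact hj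
        rw [hironakaProj, if_pos hjU, hξsum]
        by_cases hjinf : j = inf
        · subst hjinf
          have hξinf : ξ j = (∑ i ∈ Js ∪ T, σ i) - 1 + (1 - tσ) * c j := by
            simp [hξdef, lamMap, eVec]
            ring
          have hsumJs : ∑ i ∈ Js, hironakaProj T K₀ σ i = (∑ i ∈ Js, σ i) / (1 - tσ) := by
            refine hironakaProj_sum ?_
            intro i hi'
            exact Finset.mem_sdiff.mpr ⟨hJK₀ (Finset.mem_union_left T hi'),
              fun h => hdisjJs i hi' h⟩
          have hsum_split : ∑ i ∈ Js ∪ T, σ i = ∑ i ∈ Js, σ i + tσ :=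
            Finset.sum_union hdJsT
          simp only [Pi.add_apply, Pi.neg_apply, lamMap, eVec, if_pos rfl, hsumJs]
          rw [hξinf, hsum_split]
          have h1 : (1 - tσ) * c j / (1 - tσ) = c j := by
            field_simp
          simp only [ite_true]
          field_simp
          ring
        · have hjKs : j ∈ K₀ \ T := hJ''K j hj hjinf
          have hξj : ξ j = σ j + (1 - tσ) * c j := by
            have hjU' : j ∈ J'' ∪ T := hJ''U hj
            simp [hξdef, lamMap, eVec, hjinf, hjU']
          rw [hξj]
          simp only [Pi.add_apply, Pi.neg_apply, lamMap, eVec, if_neg hjinf, if_pos hj,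
            hironakaProj, if_pos hjKs]
          rw [← htσdef]
          field_simp
          ring
      · have hjne : j ≠ inf := fun h => hj (h ▸ hi)
        have hjU : j ∉ (J'' ∪ T) \ T := by rw [hUd]; exact hj
        rw [hironakaProj, if_neg hjU]
        simp [lamMap, eVec, hjne, hj, hc.2 j hj]
  · -- from the projection of the transform into the transformed projection
    rintro x hx
    obtain ⟨ξ, ⟨hξmem, htξ⟩, rfl⟩ := hx
    obtain ⟨w, hw, c, hc, rfl⟩ := hξmem
    obtain ⟨v, hv, me, hme, rfl⟩ := hw
    obtain ⟨σ, hσ, rfl⟩ := hv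
    rcases Set.mem_singleton_iff.mp hme with rfl
    have hnn : ∀ j, 0 ≤ σ j := (sys_supp D hK₀H hσ).1
    set tσ := ∑ i ∈ T, σ i with htσdef
    set ξ : Vec := lamMap (Js ∪ T) (J'' ∪ T) inf σ + -eVec inf + c with hξdef
    have hξT : ∀ i ∈ T, ξ i = σ i + c i := by
      intro i hiT
      have hine : i ≠ inf := fun h => hinfT (h ▸ hiT)
      have hiU' : i ∈ J'' ∪ T := Finset.mem_union_right J'' hiT
      simp [hξdef, lamMap, eVec, hine, hiU']
    set r := ∑ i ∈ T, c i with hrdef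
    have hr : 0 ≤ r := Finset.sum_nonneg fun i _ => hc.1 i
    have htsplit : ∑ i ∈ T, ξ i = tσ + r := by
      rw [Finset.sum_congr rfl hξT, Finset.sum_add_distrib]
    rw [htsplit] at htξ
    have htσlt : tσ < 1 := by linarith
    have hdenσ : 0 < 1 - tσ := by linarith
    have hdent : 0 < 1 - (tσ + r) := by linarith
    have htσ0 : 0 ≤ tσ := Finset.sum_nonneg fun i _ => hnn i
    set η : Vec := hironakaProj T K₀ σ with hηdef
    have hηmem : η ∈ hironakaProj T K₀ '' {σ | σ ∈ D.Δ K₀ ∧ ∑ i ∈ T, σ i < 1} :=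
      ⟨σ, ⟨hσ, htσlt⟩, rfl⟩
    set w₀ : Vec := lamMap Js J'' inf η + -eVec inf with hw₀def
    have hsumJs : ∑ i ∈ Js, η i = (∑ i ∈ Js, σ i) / (1 - tσ) := by
      refine hironakaProj_sum ?_
      intro i hi'
      exact Finset.mem_sdiff.mpr ⟨hJK₀ (Finset.mem_union_left T hi'),
        fun h => hdisjJs i hi' h⟩
    have hsum_split : ∑ i ∈ Js ∪ T, σ i = ∑ i ∈ Js, σ i + tσ := Finset.sum_union hdJsT
    have hS : 1 - tσ ≤ ∑ i ∈ Js, σ i := by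
      have := hsumJ hσ
      rw [hsum_split] at this
      linarith
    have hge : ∀ j, w₀ j ≤ hironakaProj T (J'' ∪ T) ξ j := by
      intro j
      by_cases hj : j ∈ J''
      · have hjU : j ∈ (J'' ∪ T) \ T := by rw [hUd]; exact hj
        rw [hironakaProj, if_pos hjU, htsplit]
        by_cases hjinf : j = inf
        · subst hjinf
          have hξinf : ξ j = (∑ i ∈ Js, σ i) + tσ - 1 + c j := by
            simp [hξdef, lamMap, eVec]
            rw [hsum_split]
            ring
          have hw₀inf : w₀ j = (∑ i ∈ Js, σ i) / (1 - tσ) - 1 := by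
            simp [hw₀def, lamMap, eVec, hsumJs]
            ring
          rw [hξinf, hw₀inf]
          have hkey := key_ineq hr htξ htσ0 hS
          have heq2 : ((∑ i ∈ Js, σ i) - r) / (1 - (tσ + r)) - 1
              = ((∑ i ∈ Js, σ i) + tσ - 1) / (1 - (tσ + r)) := by
            field_simp
            ring
          have hmono : ((∑ i ∈ Js, σ i) + tσ - 1) / (1 - (tσ + r))
              ≤ ((∑ i ∈ Js, σ i) + tσ - 1 + c j) / (1 - (tσ + r)) := by
            rw [div_le_div_iff₀ hdent hdent]
            nlinarith [hc.1 j]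
          linarith
        · have hjKs : j ∈ K₀ \ T := hJ''K j hj hjinf
          have hξj : ξ j = σ j + c j := by
            have hjU' : j ∈ J'' ∪ T := hJ''U hj
            simp [hξdef, lamMap, eVec, hjinf, hjU']
          have hηj : η j = σ j / (1 - tσ) := by
            rw [hηdef, hironakaProj, if_pos hjKs]
          have hw₀j : w₀ j = σ j / (1 - tσ) := by
            simp [hw₀def, lamMap, eVec, hjinf, hj, hηj]
          rw [hξj, hw₀j]
          have h1 : σ j / (1 - tσ) ≤ σ j / (1 - (tσ + r)) :=
            div_le_div_of_nonneg_left (hnn j) hdent (by linarith)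
          have h2 : σ j / (1 - (tσ + r)) ≤ (σ j + c j) / (1 - (tσ + r)) := by
            rw [div_le_div_iff₀ hdent hdent]
            nlinarith [hc.1 j]
          linarith
      · have hjne : j ≠ inf := fun h => hj (h ▸ hi)
        have hjU : j ∉ (J'' ∪ T) \ T := by rw [hUd]; exact hj
        rw [hironakaProj, if_neg hjU]
        have : w₀ j = 0 := by
          simp [hw₀def, lamMap, eVec, hjne, hj]
        rw [this]
  -- assemble
    have hzero : ∀ j, j ∉ J'' → hironakaProj T (J'' ∪ T) ξ j - w₀ j = 0 := by
      intro j hj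
      have hjne : j ≠ inf := fun h => hj (h ▸ hi)
      have hjU : j ∉ (J'' ∪ T) \ T := by rw [hUd]; exact hj
      rw [hironakaProj, if_neg hjU]
      simp [hw₀def, lamMap, eVec, hjne, hj]
    refine ⟨w₀, ⟨lamMap Js J'' inf η, ⟨η, hηmem, rfl⟩, -eVec inf, rfl, rfl⟩,
      hironakaProj T (J'' ∪ T) ξ - w₀,
      ⟨fun j => sub_nonneg.mpr (hge j), hzero⟩, by ring⟩
/-! ### S6c: one step of the lifted reduction -/

lemma spec_step {D E E₁ : PolySys} {T Js : Finset ℕ} {inf : ℕ}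
    (hs : Spec D E T) (htr : IsCharTransformAt E E₁ Js inf) (hinfD : inf ∉ D.F.I) :
    ∃ hJ : Js ∪ T ∈ Sing D,
      IsCharTransformAt D (charSys D (Js ∪ T) inf hJ hinfD) (Js ∪ T) inf ∧
      Spec (charSys D (Js ∪ T) inf hJ hinfD) E₁ T := by
  obtain ⟨hJsE, hd, hinfE, hIeq, hHeq, hΔE⟩ := htr
  obtain ⟨hJsing, hdisjJs⟩ := spec_sing_union hs hJsE
  have hinfT : inf ∉ T := fun h => hinfD (D.F.mem_sub T hs.Tmem h)
  have hJsne : Js ≠ ∅ := sing_ne_empty hJsE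
  set D₁ := charSys D (Js ∪ T) inf hJsing hinfD with hD₁def
  have hΔ₁ : D₁.Δ = charΔ D (Js ∪ T) inf := rfl
  have hH₁ : D₁.F.H = blowupH D.F.H (Js ∪ T) inf := rfl
  refine ⟨hJsing, charSys_isCharTransformAt D (Js ∪ T) inf hJsing hinfD, ?_, ?_, ?_, ?_, ?_, ?_⟩
  · -- Tmem
    refine Or.inl ⟨hs.Tmem, fun hsub => ?_⟩
    obtain ⟨x, hx⟩ := Finset.nonempty_iff_ne_empty.mpr hJsne
    exact hdisjJs x hx (hsub (Finset.mem_union_left T hx))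
  · -- Tns
    rintro ⟨hTmem₁, hge⟩
    have hΔT : D₁.Δ T = D.Δ T := by
      rw [hΔ₁, charΔ, if_neg hinfT]
    rw [hΔT] at hge
    exact hs.Tns ⟨hs.Tmem, hge⟩
  · -- mc
    intro J'' hJ''sing j hjT
    have hjTmem : j ∈ T := Finset.mem_coe.mp hjT
    have hJ''mem : J'' ∈ blowupH D.F.H (Js ∪ T) inf := hJ''sing.1
    by_cases hi : inf ∈ J''
    · obtain ⟨hK, hJK, _, hrep⟩ := blowup_mem_of_infty hJsing.1 hinfD hJ''mem hi
      have hKsing : blowdown (Js ∪ T) inf J'' ∈ Sing D := sing_contact_ge D hJsing hK hJK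
      obtain ⟨σ, hσ, hsumK, hσj⟩ := hs.mc _ hKsing hjT
      have hnn : ∀ i, 0 ≤ σ i := (sys_supp D hKsing.1 hσ).1
      have hmem' : lamMap (Js ∪ T) J'' inf σ - eVec inf ∈ D₁.Δ J'' := by
        rw [hΔ₁, charDelta_infty D hi rfl hK]
        exact ⟨lamMap (Js ∪ T) J'' inf σ + -eVec inf,
          ⟨lamMap (Js ∪ T) J'' inf σ, ⟨σ, hσ, rfl⟩, -eVec inf, rfl, rfl⟩,
          0, suppCone_zero _, by ring⟩
      set σ' := lamMap (Js ∪ T) J'' inf σ - eVec inf with hσ'def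
      have hσ'inf : σ' inf = (∑ i ∈ Js ∪ T, σ i) - 1 := by simp [hσ'def, lamMap, eVec]
      have hσ'er : ∀ i ∈ J''.erase inf, σ' i = σ i := by
        intro i hi'
        rcases Finset.mem_erase.mp hi' with ⟨hine, hiJ''⟩
        simp [hσ'def, lamMap, eVec, hine, hiJ'']
      have hsum' : ∑ i ∈ J'', σ' i
          = (∑ i ∈ J''.erase inf, σ i) + ((∑ i ∈ Js ∪ T, σ i) - 1) := by
        rw [← Finset.sum_erase_add _ _ hi, hσ'inf]
        congr 1
        exact Finset.sum_congr rfl hσ'er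
      have hsub1 : J''.erase inf ∪ (Js ∪ T) ⊆ blowdown (Js ∪ T) inf J'' :=
        Finset.union_subset (erase_subset_blowdown hi) hJK
      have hunion_inter : ∑ i ∈ J''.erase inf ∪ (Js ∪ T), σ i
            + ∑ i ∈ J''.erase inf ∩ (Js ∪ T), σ i
          = ∑ i ∈ J''.erase inf, σ i + ∑ i ∈ Js ∪ T, σ i :=
        Finset.sum_union_inter
      have h1le : ∑ i ∈ J''.erase inf ∪ (Js ∪ T), σ i ≤ 1 := by
        rw [← hsumK]
        exact Finset.sum_le_sum_of_subset_of_nonneg hsub1 (fun i _ _ => hnn i)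
      have h2le : ∑ i ∈ J''.erase inf ∩ (Js ∪ T), σ i ≤ 1 := by
        rw [← hsumK]
        exact Finset.sum_le_sum_of_subset_of_nonneg
          ((Finset.inter_subset_right).trans hJK) (fun i _ _ => hnn i)
      have hJ''ge : 1 ≤ ∑ i ∈ J'', σ' i :=
        le_trans hJ''sing.2 (contactExp_le (sing_ne_empty hJ''sing)
          (sys_supp D₁ hJ''sing.1) hmem')
      have hJ''ge' : 1 ≤ (∑ i ∈ J''.erase inf, σ i) + ((∑ i ∈ Js ∪ T, σ i) - 1) := by
        rw [← hsum']; exact hJ''ge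
      have hQ : ∑ i ∈ J''.erase inf ∩ (Js ∪ T), σ i = 1 := by linarith
      have hjJ'' : j ∈ J''.erase inf := by
        by_contra hjn
        have hjK : j ∈ blowdown (Js ∪ T) inf J'' := hJK (Finset.mem_union_right Js hjTmem)
        have hzero : ∑ i ∈ blowdown (Js ∪ T) inf J'' \ (J''.erase inf ∩ (Js ∪ T)), σ i
            = 0 := by
          rw [Finset.sum_sdiff_eq_sub
            ((Finset.inter_subset_left).trans (erase_subset_blowdown hi)), hsumK, hQ]
          ring
        have hz := (Finset.sum_eq_zero_iff_of_nonneg (fun i _ => hnn i)).mp hzero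
        refine hσj (hz j (Finset.mem_sdiff.mpr ⟨hjK, fun h => hjn (Finset.mem_inter.mp h).1⟩))
      have hsum1 : ∑ i ∈ J'', σ' i = 1 := by
        rw [hsum']; linarith
      refine ⟨σ', hmem', hsum1, ?_⟩
      rw [hσ'er j hjJ'']
      exact hσj
    · have hmemJ'' := blowup_mem_s hJ''mem hi
      have hΔJ'' : D₁.Δ J'' = D.Δ J'' := by
        rw [hΔ₁, charΔ, if_neg hi]
      have hsingD : J'' ∈ Sing D := ⟨hmemJ''.1, by
        have := hJ''sing.2
        rwa [hΔJ''] at this⟩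
      have := hs.mc J'' hsingD hjT
      rw [hΔJ'']
      exact this
  · -- Ieq
    rw [hIeq, hs.Ieq]
    show insert inf (D.F.I \ T) = insert inf D.F.I \ T
    ext x
    simp only [Finset.mem_insert, Finset.mem_sdiff]
    constructor
    · rintro (rfl | ⟨hx, hxT⟩)
      · exact ⟨Or.inl rfl, hinfT⟩
      · exact ⟨Or.inr hx, hxT⟩
    · rintro ⟨rfl | hx, hxT⟩
      · exact Or.inl rfl
      · exact Or.inr ⟨hx, hxT⟩
  · -- Heq
    rw [hHeq, hs.Heq]
    exact proj_blowup_H hs.Tmem hdisjJs hinfD hJsing.1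
  · -- Δeq
    intro J'' hJ''mem
    rw [hΔE J'' hJ''mem]
    have hJ''blow : J'' ∈ blowupH E.F.H Js inf := by rw [← hHeq]; exact hJ''mem
    have hdisjJ'' : ∀ j ∈ J'', j ∉ T := by
      intro j hj
      have hjI : j ∈ insert inf E.F.I := by
        rw [← hIeq]; exact E₁.F.mem_sub J'' hJ''mem hj
      rcases Finset.mem_insert.mp hjI with rfl | hjI'
      · exact hinfT
      · rw [hs.Ieq] at hjI'
        exact (Finset.mem_sdiff.mp hjI').2
    by_cases hi : inf ∈ J''
    · obtain ⟨hKs, hJsKs, _, hrep⟩ := blowup_mem_of_infty hJsE.1 hinfE hJ''blow hi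
      rw [charDelta_infty E hi rfl hKs, hs.Δeq _ hKs,
        proj_comm_infty hs hJsing hdisjJs hinfD hKs hJsKs hi hrep hdisjJ'' hinfE]
      rfl
    · have hmemJ'' := blowup_mem_s hJ''blow hi
      rw [charΔ, if_neg hi, hs.Δeq _ hmemJ''.1]
      have hiU : inf ∉ J'' ∪ T := by
        intro h
        rcases Finset.mem_union.mp h with h' | h'
        · exact hi h'
        · exact hinfT h'
      have hΔU : D₁.Δ (J'' ∪ T) = D.Δ (J'' ∪ T) := by
        rw [hΔ₁, charΔ, if_neg hiU]
      show projΔ D T J'' = projΔ D₁ T J''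
      simp only [projΔ, hΔU]
/-! ### S7: renaming of indices by a permutation -/

def renVec (π : Equiv.Perm ℕ) (σ : Vec) : Vec := fun j => σ (π.symm j)

lemma renVec_isLinear (π : Equiv.Perm ℕ) : IsLinearMap ℝ (renVec π) :=
  ⟨fun _ _ => rfl, fun _ _ => rfl⟩

lemma mem_image_perm {π : Equiv.Perm ℕ} {J : Finset ℕ} {j : ℕ} :
    j ∈ J.image π ↔ π.symm j ∈ J := by
  constructor
  · intro h
    obtain ⟨x, hx, rfl⟩ := Finset.mem_image.mp h
    simpa using hx
  · intro h
    exact Finset.mem_image.mpr ⟨π.symm j, h, π.apply_symm_apply j⟩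

lemma image_symm_image (π : Equiv.Perm ℕ) (J : Finset ℕ) : (J.image π).image π.symm = J := by
  rw [Finset.image_image]
  simp

lemma image_image_symm (π : Equiv.Perm ℕ) (J : Finset ℕ) : (J.image π.symm).image π = J := by
  rw [Finset.image_image]
  simp

lemma set_image_symm_image (π : Equiv.Perm ℕ) (H : Set (Finset ℕ)) :
    (Finset.image π.symm) '' ((Finset.image π) '' H) = H := by
  ext K
  constructor
  · rintro ⟨_, ⟨K₂, h2, rfl⟩, rfl⟩
    rwa [image_symm_image]
  · intro h
    exact ⟨K.image π, ⟨K, h, rfl⟩, image_symm_image π K⟩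

lemma sum_image_perm (π : Equiv.Perm ℕ) (J : Finset ℕ) (σ : Vec) :
    ∑ j ∈ J.image π, renVec π σ j = ∑ j ∈ J, σ j := by
  rw [Finset.sum_image (fun a _ b _ h => π.injective h)]
  exact Finset.sum_congr rfl fun j _ => by simp [renVec]

lemma renVec_suppCone (π : Equiv.Perm ℕ) (J : Finset ℕ) :
    renVec π '' suppCone J = suppCone (J.image π) := by
  apply Set.Subset.antisymm
  · rintro _ ⟨σ, hσ, rfl⟩
    refine ⟨fun j => hσ.1 _, fun j hj => hσ.2 _ (fun h => hj (mem_image_perm.mpr h))⟩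
  · intro τ hτ
    refine ⟨renVec π.symm τ, ⟨fun j => hτ.1 _, fun j hj => ?_⟩, ?_⟩
    · refine hτ.2 (π j) (fun h => hj ?_)
      rwa [mem_image_perm, Equiv.symm_apply_apply] at h
    · funext j
      simp [renVec]

lemma ren_posHull (π : Equiv.Perm ℕ) (J : Finset ℕ) (A : Set Vec) :
    renVec π '' posHull J A = posHull (J.image π) (renVec π '' A) := by
  rw [posHull_eq_add, posHull_eq_add, linimage_add (renVec_isLinear π),
    (renVec_isLinear π).image_convexHull, renVec_suppCone]

lemma renVec_lattice {π : Equiv.Perm ℕ} {J : Finset ℕ} {d : ℕ} {a : Vec}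
    (ha : a ∈ latticePts J d) : renVec π a ∈ latticePts (J.image π) d := by
  refine ⟨?_, fun j => ha.2 (π.symm j)⟩
  have : renVec π a ∈ renVec π '' suppCone J := ⟨a, ha.1, rfl⟩
  rwa [renVec_suppCone] at this

/-- The renamed polyhedra system. -/
noncomputable def renSys (π : Equiv.Perm ℕ) (P : PolySys) : PolySys where
  F := { I := P.F.I.image π
         I_nonempty := P.F.I_nonempty.image π
         H := (Finset.image π) '' P.F.H
         mem_sub := by
           rintro _ ⟨J, hJ, rfl⟩
           exact Finset.image_subset_image (P.F.mem_sub J hJ)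
         downward := by
           rintro _ ⟨J, hJ, rfl⟩ J' hJ'
           refine ⟨J'.image π.symm, P.F.downward J hJ _ ?_, image_image_symm π J'⟩
           intro x hx
           obtain ⟨y, hy, rfl⟩ := Finset.mem_image.mp hx
           have := hJ' hy
           rwa [mem_image_perm] at this }
  d := P.d
  d_pos := P.d_pos
  Δ := fun J => renVec π '' P.Δ (J.image π.symm)
  char := by
    rintro _ ⟨J, hJ, rfl⟩
    obtain ⟨A, hA, hEq⟩ := P.char J hJ
    show IsCharPoly (J.image π) P.d (renVec π '' P.Δ ((J.image π).image π.symm))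
    rw [image_symm_image, hEq]
    exact ⟨renVec π '' A, fun a ⟨b, hb, hba⟩ => hba ▸ renVec_lattice (hA hb),
      ren_posHull π J A⟩
  nonempty := by
    rintro _ ⟨J, hJ, rfl⟩
    show (renVec π '' P.Δ ((J.image π).image π.symm)).Nonempty
    rw [image_symm_image]
    exact (P.nonempty J hJ).image _
  compat := by
    rintro _ ⟨J₁, hJ₁, rfl⟩ _ ⟨J₂, hJ₂, rfl⟩ hab
    have h12 : J₁ ⊆ J₂ := by
      rwa [Finset.image_subset_image_iff π.injective] at hab
    show renVec π '' P.Δ ((J₁.image π).image π.symm)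
      = resV (J₁.image π) '' (renVec π '' P.Δ ((J₂.image π).image π.symm))
    rw [image_symm_image, image_symm_image, ← sys_res P hJ₁ hJ₂ h12,
      Set.image_image, Set.image_image]
    refine Set.image_congr fun σ _ => ?_
    funext j
    by_cases hj : j ∈ J₁.image π
    · simp [resV, renVec, hj, mem_image_perm.mp hj]
    · have hj' : π.symm j ∉ J₁ := fun h => hj (mem_image_perm.mpr h)
      simp [resV, renVec, hj, hj']

lemma renSys_Δ_image (π : Equiv.Perm ℕ) (P : PolySys) (J : Finset ℕ) :
    (renSys π P).Δ (J.image π) = renVec π '' P.Δ J := by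
  show renVec π '' P.Δ ((J.image π).image π.symm) = _
  rw [image_symm_image]

lemma ren_contactExp (π : Equiv.Perm ℕ) (J : Finset ℕ) (Δ : Set Vec) :
    contactExp (J.image π) (renVec π '' Δ) = contactExp J Δ := by
  by_cases hJ : J = ∅
  · subst hJ
    simp [contactExp]
  · have h2 : J.image π ≠ ∅ := by
      simp [Finset.image_eq_empty, hJ]
    rw [contactExp, if_neg h2, contactExp, if_neg hJ]
    congr 1
    rw [Set.image_image]
    exact Set.image_congr fun σ _ => sum_image_perm π J σ

lemma ren_Sing (π : Equiv.Perm ℕ) (P : PolySys) :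
    Sing (renSys π P) = (Finset.image π) '' Sing P := by
  ext K
  constructor
  · rintro ⟨hK, hge⟩
    obtain ⟨J, hJ, rfl⟩ := hK
    refine ⟨J, ⟨hJ, ?_⟩, rfl⟩
    rwa [renSys_Δ_image, ren_contactExp] at hge
  · rintro ⟨J, ⟨hJ, hge⟩, rfl⟩
    refine ⟨⟨J, hJ, rfl⟩, ?_⟩
    rwa [renSys_Δ_image, ren_contactExp]

lemma ren_blowdown (π : Equiv.Perm ℕ) (J J' : Finset ℕ) (inf : ℕ) :
    blowdown (J.image π) (π inf) (J'.image π) = (blowdown J inf J').image π := by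
  by_cases hi : inf ∈ J'
  · rw [blowdown, if_pos (Finset.mem_image_of_mem π hi), blowdown, if_pos hi,
      Finset.image_union, Finset.image_erase π.injective]
  · rw [blowdown, if_neg (fun h => hi (by rwa [mem_image_perm, Equiv.symm_apply_apply] at h)),
      blowdown, if_neg hi]

lemma ren_lamMap (π : Equiv.Perm ℕ) (J J' : Finset ℕ) (inf : ℕ) (σ : Vec) :
    renVec π (lamMap J J' inf σ) = lamMap (J.image π) (J'.image π) (π inf) (renVec π σ) := by
  funext j
  by_cases hj : j = π inf
  · subst hj
    have h1 : π.symm (π inf) = inf := Equiv.symm_apply_apply π inf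
    simp only [renVec, lamMap, h1, eq_self_iff_true, if_true, if_pos rfl]
    exact (sum_image_perm π J σ).symm
  · have hj' : π.symm j ≠ inf := fun h => hj (by rw [← h, Equiv.apply_symm_apply])
    by_cases hjJ : j ∈ J'.image π
    · simp [renVec, lamMap, hj, hj', mem_image_perm.mp hjJ, hjJ]
    · have hj2 : π.symm j ∉ J' := fun h => hjJ (mem_image_perm.mpr h)
      simp [renVec, lamMap, hj, hj', hjJ, hj2]

lemma ren_eVec (π : Equiv.Perm ℕ) (inf : ℕ) : renVec π (eVec inf) = eVec (π inf) := by
  funext j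
  by_cases hj : j = π inf
  · subst hj
    simp [renVec, eVec]
  · have hj' : π.symm j ≠ inf := fun h => hj (by rw [← h, Equiv.apply_symm_apply])
    simp [renVec, eVec, hj, hj']

lemma ren_charΔ (π : Equiv.Perm ℕ) (P : PolySys) (J J' : Finset ℕ) (inf : ℕ) :
    renVec π '' charΔ P J inf J' = charΔ (renSys π P) (J.image π) (π inf) (J'.image π) := by
  by_cases hi : inf ∈ J'
  · have hi' : π inf ∈ J'.image π := Finset.mem_image_of_mem π hi
    rw [charΔ, if_pos hi, charΔ, if_pos hi', ren_blowdown, renSys_Δ_image]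
    have hlam : lamMap (J.image π) (J'.image π) (π inf) '' (renVec π '' P.Δ (blowdown J inf J'))
        = renVec π '' (lamMap J J' inf '' P.Δ (blowdown J inf J')) := by
      rw [Set.image_image, Set.image_image]
      exact Set.image_congr fun σ _ => (ren_lamMap π J J' inf σ).symm
    rw [hlam, ← ren_posHull, Set.image_image, Set.image_image]
    refine Set.image_congr fun σ _ => ?_
    rw [(renVec_isLinear π).map_sub, ren_eVec]
  · have hi' : π inf ∉ J'.image π :=
      fun h => hi (by rwa [mem_image_perm, Equiv.symm_apply_apply] at h)
    rw [charΔ, if_neg hi, charΔ, if_neg hi', renSys_Δ_image]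

lemma blowupH_image_subset (π : Equiv.Perm ℕ) (H : Set (Finset ℕ)) (J : Finset ℕ) (inf : ℕ) :
    (Finset.image π) '' blowupH H J inf ⊆ blowupH ((Finset.image π) '' H) (J.image π) (π inf) := by
  rintro _ ⟨K, ⟨hKH, hns⟩ | ⟨K₀, ⟨hK₀, hJK₀⟩, A, hA, rfl⟩, rfl⟩
  · exact Or.inl ⟨⟨K, hKH, rfl⟩,
      fun h => hns (by rwa [Finset.image_subset_image_iff π.injective] at h)⟩
  · refine Or.inr ⟨K₀.image π, ⟨⟨K₀, hK₀, rfl⟩, Finset.image_subset_image hJK₀⟩, A.image π,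
      ?_, ?_⟩
    · rw [Finset.ssubset_iff_subset_ne]
      exact ⟨Finset.image_subset_image hA.subset,
        fun h => hA.ne (Finset.image_injective π.injective h)⟩
    · rw [Finset.image_union, Finset.image_union, Finset.image_singleton,
        Finset.image_sdiff _ _ π.injective]

lemma ren_blowupH (π : Equiv.Perm ℕ) (H : Set (Finset ℕ)) (J : Finset ℕ) (inf : ℕ) :
    blowupH ((Finset.image π) '' H) (J.image π) (π inf) = (Finset.image π) '' blowupH H J inf := by
  apply Set.Subset.antisymm
  · intro x hx
    have hx' := blowupH_image_subset π.symm _ _ _ (Set.mem_image_of_mem _ hx)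
    rw [set_image_symm_image, image_symm_image, Equiv.symm_apply_apply] at hx'
    exact ⟨x.image π.symm, hx', image_image_symm π x⟩
  · exact blowupH_image_subset π H J inf

lemma ren_transformAt {P Q : PolySys} {J : Finset ℕ} {inf : ℕ} (π : Equiv.Perm ℕ)
    (h : IsCharTransformAt P Q J inf) :
    IsCharTransformAt (renSys π P) (renSys π Q) (J.image π) (π inf) := by
  obtain ⟨h1, h2, h3, h4, h5, h6⟩ := h
  refine ⟨?_, h2, ?_, ?_, ?_, ?_⟩
  · rw [ren_Sing]
    exact ⟨J, h1, rfl⟩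
  · intro hmem
    obtain ⟨x, hx, hxe⟩ := Finset.mem_image.mp hmem
    exact h3 (π.injective hxe ▸ hx)
  · show Q.F.I.image π = insert (π inf) (P.F.I.image π)
    rw [h4, Finset.image_insert]
  · show (Finset.image π) '' Q.F.H
        = blowupH ((Finset.image π) '' P.F.H) (J.image π) (π inf)
    rw [h5, ren_blowupH]
  · rintro _ ⟨J', hJ', rfl⟩
    rw [renSys_Δ_image, h6 J' hJ', ren_charΔ]

/-- reductions of bounded length -/
def RedN (k : ℕ) (P : PolySys) : Prop :=
  ∃ seq : ℕ → PolySys, seq 0 = P ∧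
    (∀ i, i < k → ∃ J, IsCharTransform (seq i) (seq (i + 1)) J) ∧ Sing (seq k) = ∅

lemma ren_RedN {k : ℕ} {P : PolySys} (π : Equiv.Perm ℕ) (h : RedN k P) :
    RedN k (renSys π P) := by
  obtain ⟨seq, h0, hstep, hsing⟩ := h
  refine ⟨fun i => renSys π (seq i), by show renSys π (seq 0) = renSys π P; rw [h0], ?_, ?_⟩
  · intro i hi
    obtain ⟨J, inf, htr⟩ := hstep i hi
    exact ⟨J.image π, π inf, ren_transformAt π htr⟩
  · show Sing (renSys π (seq k)) = ∅
    rw [ren_Sing, hsing, Set.image_empty]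
/-! ### S8: assembling the induction -/

lemma transfer_transformAt {P P' Q : PolySys} {J : Finset ℕ} {inf : ℕ}
    (hd : P'.d = P.d) (hI : P'.F.I = P.F.I) (hH : P'.F.H = P.F.H)
    (hΔ : ∀ K ∈ P.F.H, P'.Δ K = P.Δ K)
    (h : IsCharTransformAt P Q J inf) : IsCharTransformAt P' Q J inf := by
  obtain ⟨h1, h2, h3, h4, h5, h6⟩ := h
  have hsing : J ∈ Sing P' := ⟨by rw [hH]; exact h1.1, by rw [hΔ J h1.1]; exact h1.2⟩
  refine ⟨hsing, by rw [h2, hd], by rw [hI]; exact h3, by rw [h4, hI], by rw [h5, hH], ?_⟩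
  intro J' hJ'
  rw [h6 J' hJ']
  have hJ'b : J' ∈ blowupH P.F.H J inf := by rw [← h5]; exact hJ'
  by_cases hi : inf ∈ J'
  · obtain ⟨hK, _, _, _⟩ := blowup_mem_of_infty h1.1 h3 hJ'b hi
    rw [charΔ, if_pos hi, charΔ, if_pos hi, hΔ _ hK]
  · rw [charΔ, if_neg hi, charΔ, if_neg hi, hΔ _ (blowup_mem_s hJ'b hi).1]

lemma fresh_transform {E E₁ : PolySys} {Js : Finset ℕ} {inf : ℕ} {k : ℕ}
    (htr : IsCharTransformAt E E₁ Js inf) (hred : RedN k E₁) (S : Finset ℕ) :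
    ∃ (inf' : ℕ) (E₁' : PolySys), inf' ∉ S ∧ IsCharTransformAt E E₁' Js inf' ∧ RedN k E₁' := by
  obtain ⟨h1, h2, h3, h4, h5, h6⟩ := htr
  obtain ⟨inf', hinf'⟩ := Infinite.exists_notMem_finset (S ∪ E.F.I ∪ {inf})
  have hS : inf' ∉ S := fun h => hinf' (Finset.mem_union_left _ (Finset.mem_union_left _ h))
  have hI' : inf' ∉ E.F.I :=
    fun h => hinf' (Finset.mem_union_left _ (Finset.mem_union_right _ h))
  have hne : inf' ≠ inf :=
    fun h => hinf' (Finset.mem_union_right _ (h ▸ Finset.mem_singleton_self inf))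
  set π : Equiv.Perm ℕ := Equiv.swap inf inf' with hπ
  have hfix : ∀ x ∈ E.F.I, π x = x := fun x hx =>
    Equiv.swap_apply_of_ne_of_ne (fun h => h3 (h ▸ hx)) (fun h => hI' (h ▸ hx))
  have hfixsymm : ∀ x ∈ E.F.I, π.symm x = x := by
    intro x hx
    rw [hπ, Equiv.symm_swap]
    exact Equiv.swap_apply_of_ne_of_ne (fun h => h3 (h ▸ hx)) (fun h => hI' (h ▸ hx))
  have hfixset : ∀ K ∈ E.F.H, K.image π = K := by
    intro K hK
    rw [Finset.image_congr (fun x hx => hfix x (E.F.mem_sub K hK hx)), Finset.image_id']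
  have hπinf : π inf = inf' := Equiv.swap_apply_left inf inf'
  have htr2 := ren_transformAt π (⟨h1, h2, h3, h4, h5, h6⟩ :
    IsCharTransformAt E E₁ Js inf)
  rw [hfixset Js h1.1, hπinf] at htr2
  refine ⟨inf', renSys π E₁, hS, ?_, ren_RedN π hred⟩
  have hIim : E.F.I.image π = E.F.I := by
    rw [Finset.image_congr (fun x hx => hfix x hx), Finset.image_id']
  have hHim : (Finset.image π) '' E.F.H = E.F.H := by
    ext K
    constructor
    · rintro ⟨K₀, h0, rfl⟩
      rwa [hfixset K₀ h0]
    · intro hK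
      exact ⟨K, hK, hfixset K hK⟩
  refine transfer_transformAt (P := renSys π E) (P' := E) rfl hIim.symm hHim.symm ?_ htr2
  rintro K ⟨K₀, h0, rfl⟩
  rw [renSys_Δ_image, hfixset K₀ h0]
  have hfixvec : ∀ σ ∈ E.Δ K₀, renVec π σ = σ := by
    intro σ hσ
    have hsupp := sys_supp E h0 hσ
    funext j
    by_cases hj : j ∈ E.F.I
    · rw [renVec, hfixsymm j hj]
    · have hjK : j ∉ K₀ := fun h => hj (E.F.mem_sub K₀ h0 h)
      have h1' : σ j = 0 := hsupp.2 j hjK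
      have h2' : σ (π.symm j) = 0 := by
        refine hsupp.2 _ (fun h => ?_)
        have hj2 := E.F.mem_sub K₀ h0 h
        have := hfix _ hj2
        rw [Equiv.apply_symm_apply] at this
        exact hj (this ▸ hj2)
      rw [renVec, h2', h1']
  rw [Set.image_congr hfixvec, Set.image_id']

lemma main_induction : ∀ (k : ℕ) (D E : PolySys) (T : Finset ℕ),
    Spec D E T → RedN k E → HasReduction D := by
  intro k
  induction k with
  | zero =>
    intro D E T hs hred
    obtain ⟨seq, h0, _, hsing⟩ := hred
    rw [h0] at hsing
    exact ⟨0, fun _ => D, rfl, fun i hi => absurd hi (Nat.not_lt_zero i),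
      spec_sing_empty hs hsing⟩
  | succ k ih =>
    intro D E T hs hred
    obtain ⟨seq, h0, hstep, hsing⟩ := hred
    obtain ⟨Js, inf, htr⟩ := hstep 0 (Nat.succ_pos k)
    rw [h0] at htr
    have hred₁ : RedN k (seq 1) :=
      ⟨fun i => seq (i + 1), rfl, fun i hi => hstep (i + 1) (by omega), hsing⟩
    obtain ⟨inf', E₁', hfS, htr', hred'⟩ := fresh_transform htr hred₁ D.F.I
    obtain ⟨hJsing, htrD, hspec'⟩ := spec_step hs htr' hfS
    have hD₁ := ih _ _ _ hspec' hred'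
    obtain ⟨k', seq', h0', hstep', hsing'⟩ := hD₁
    refine ⟨k' + 1, fun i => if i = 0 then D else seq' (i - 1), by simp, ?_, ?_⟩
    · intro i hi
      by_cases h : i = 0
      · subst h
        simp only [if_pos rfl, if_neg one_ne_zero]
        refine ⟨Js ∪ T, inf', ?_⟩
        rw [show (1 : ℕ) - 1 = 0 from rfl, h0']
        exact htrD
      · have h1 : i - 1 + 1 = i := Nat.succ_pred_eq_of_pos (Nat.pos_of_ne_zero h)
        simp only [if_neg h, if_neg (show i + 1 ≠ 0 by omega)]
        have := hstep' (i - 1) (by omega)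
        rw [show i + 1 - 1 = i - 1 + 1 by omega]
        exact this
    · simp only [if_neg (Nat.succ_ne_zero k')]
      exact hsing'
/-- Reduction of singularities via maximal contact: if `T ∉ Sing(D)` has maximal
contact with the special system `D` and Hironaka's projection `D^T` admits a
reduction of singularities, then so does `D`. -/
theorem reduction_via_maximal_contact (D E : PolySys) (hsp : IsSpecial D)
    (T : Finset ℕ) (hTns : T ∉ Sing D) (hmc : HasMaximalContact D T)
    (hproj : IsHironakaProjection D E T) (hred : HasReduction E) :
    HasReduction D := by
  obtain ⟨hTmemH, hmc'⟩ := hmc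
  obtain ⟨hIeq, hHeq, hdeq, hΔeq⟩ := hproj
  obtain ⟨k, seq, h0, hstep, hsing⟩ := hred
  exact main_induction k D E T ⟨hTmemH, hTns, hmc', hIeq, hHeq, hΔeq⟩
    ⟨seq, h0, hstep, hsing⟩

end RedSing
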